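/- arXiv:2203.06789 — 4 statements merged into one kernel-verified Lean document; each statement's English description precedes it below -/
import Mathlib

section
/- For all integers n ≥ 2 and t with 2 ≤ t ≤ n, the sum of the signs of all permutations σ ∈ S_n with |supp(σ)| = t equals (−1)^{t−1}·(t−1)·C(n,t), where the sign of a permutation is 1 if it is even and −1 if it is odd, and C(n,t) is the binomial coefficient. -/
open Finset

/-- Adjacency matrix of the Cayley graph `Cay(S_n, S)`. -/
def adjMat (n : ℕ) (S : Finset (Equiv.Perm (Fin n))) :
    Matrix (Equiv.Perm (Fin n)) (Equiv.Perm (Fin n)) ℝ :=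
  Matrix.of fun g h => if g⁻¹ * h ∈ S then 1 else 0

/-- `lam` is an eigenvalue of the Cayley graph `Cay(S_n, S)`. -/
def IsEig (n : ℕ) (S : Finset (Equiv.Perm (Fin n))) (lam : ℝ) : Prop :=
  ∃ v : Equiv.Perm (Fin n) → ℝ, v ≠ 0 ∧ (adjMat n S).mulVec v = lam • v

/-- The number of fixed points of a permutation. -/
def fixCount (n : ℕ) (σ : Equiv.Perm (Fin n)) : ℕ :=
  (univ.filter fun i => σ i = i).card

/-- The eigenvalue of `Cay(S_n, S)` afforded by the standard representation. -/
noncomputable def stdEig (n : ℕ) (S : Finset (Equiv.Perm (Fin n))) : ℝ :=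
  (1 / ((n : ℝ) - 1)) * ∑ σ ∈ S, ((fixCount n σ : ℝ) - 1)

/-- `Cay(S_n, S)` has the Aldous property. -/
def HasAldous (n : ℕ) (S : Finset (Equiv.Perm (Fin n))) : Prop :=
  stdEig n S < S.card ∧ IsEig n S (stdEig n S) ∧
    ∀ lam : ℝ, IsEig n S lam → lam ≠ (S.card : ℝ) → lam ≤ stdEig n S

/-- `S` is a conjugacy class of `S_n`. -/
def IsConjClass (n : ℕ) (S : Finset (Equiv.Perm (Fin n))) : Prop :=
  ∃ σ : Equiv.Perm (Fin n), ∀ τ, τ ∈ S ↔ IsConj σ τ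

/-- `T(n, I)`: the set of permutations whose support size lies in `I`. -/
def T (n : ℕ) (I : Finset ℕ) : Finset (Equiv.Perm (Fin n)) :=
  univ.filter fun σ => σ.support.card ∈ I

def cval (k : ℕ) : ℤ := (-1) ^ k * (1 - (k : ℤ))

lemma Tsum (k : ℕ) : ∑ j ∈ range (k + 1), (j : ℤ) * ((-1) ^ j * k.choose j) =
    if k = 1 then -1 else 0 := by
  cases k with
  | zero => simp
  | succ m =>
    rw [Finset.sum_range_succ']
    simp only [Nat.cast_zero, zero_mul, add_zero]
    have key : ∀ i : ℕ, ((i : ℤ) + 1) * ((-1) ^ (i + 1) * ((m + 1).choose (i + 1) : ℤ)) =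
        -((m : ℤ) + 1) * ((-1) ^ i * (m.choose i : ℤ)) := by
      intro i
      have h := Nat.add_one_mul_choose_eq m i
      have h' : ((m : ℤ) + 1) * (m.choose i : ℤ) = ((m + 1).choose (i + 1) : ℤ) * ((i : ℤ) + 1) := by
        exact_mod_cast congrArg (Nat.cast : ℕ → ℤ) h
      rw [pow_succ]
      linear_combination ((-1:ℤ) ^ i) * h'
    calc ∑ i ∈ range (m + 1), ((i : ℤ) + 1) * ((-1) ^ (i + 1) * ((m + 1).choose (i + 1) : ℤ))
        = ∑ i ∈ range (m + 1), -((m : ℤ) + 1) * ((-1) ^ i * (m.choose i : ℤ)) := by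
          apply Finset.sum_congr rfl; intro i _; exact key i
      _ = -((m : ℤ) + 1) * ∑ i ∈ range (m + 1), ((-1) ^ i * (m.choose i : ℤ)) := by
          rw [Finset.mul_sum]
      _ = _ := by
          rw [Int.alternating_sum_range_choose]
          rcases Nat.eq_zero_or_pos m with rfl | hm
          · norm_num
          · rw [if_neg (by omega), if_neg (by omega)]; ring

lemma binom_id (k : ℕ) : ∑ j ∈ range (k + 1), (k.choose j : ℤ) * cval j =
    if k ≤ 1 then 1 else 0 := by
  have : ∀ j, (k.choose j : ℤ) * cval j =
      (-1) ^ j * (k.choose j : ℤ) - (j : ℤ) * ((-1) ^ j * k.choose j) := by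
    intro j; unfold cval; ring
  simp only [this, Finset.sum_sub_distrib]
  rw [Int.alternating_sum_range_choose, Tsum]
  rcases Nat.lt_or_ge k 2 with h | h
  · interval_cases k <;> norm_num
  · rw [if_neg (by omega), if_neg (by omega), if_neg (by omega)]; ring

lemma sum_sign_subset_zero {n : ℕ} (s : Finset (Fin n)) (hs : 2 ≤ s.card) :
    ∑ σ ∈ univ.filter (fun σ : Equiv.Perm (Fin n) => σ.support ⊆ s),
      (Equiv.Perm.sign σ : ℤ) = 0 := by
  obtain ⟨a, ha, b, hb, hab⟩ := Finset.one_lt_card.mp hs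
  have key : ∀ σ : Equiv.Perm (Fin n), σ.support ⊆ s →
      (Equiv.swap a b * σ).support ⊆ s := by
    intro σ hσ
    refine (Equiv.Perm.support_mul_le _ _).trans (sup_le ?_ hσ)
    rw [Equiv.Perm.support_swap hab]
    intro x hx
    rcases Finset.mem_insert.mp hx with rfl | hx
    · exact ha
    · rw [Finset.mem_singleton] at hx; subst hx; exact hb
  have h2 : ∑ σ ∈ univ.filter (fun σ : Equiv.Perm (Fin n) => σ.support ⊆ s),
        (Equiv.Perm.sign σ : ℤ)
      = ∑ σ ∈ univ.filter (fun σ : Equiv.Perm (Fin n) => σ.support ⊆ s),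
        (-(Equiv.Perm.sign σ : ℤ)) := by
    refine Finset.sum_equiv (Equiv.mulLeft (Equiv.swap a b)) ?_ ?_
    · intro σ
      simp only [Finset.mem_filter, Finset.mem_univ, true_and, Equiv.coe_mulLeft]
      constructor
      · exact key σ
      · intro h
        have := key _ h
        rwa [← mul_assoc, Equiv.swap_mul_self, one_mul] at this
    · intro σ _
      simp only [Equiv.coe_mulLeft, map_mul, Equiv.Perm.sign_swap hab]
      push_cast
      ring
  rw [Finset.sum_neg_distrib] at h2
  omega

lemma sum_sign_subset {n : ℕ} (s : Finset (Fin n)) :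
    ∑ σ ∈ univ.filter (fun σ : Equiv.Perm (Fin n) => σ.support ⊆ s),
      (Equiv.Perm.sign σ : ℤ) = if s.card ≤ 1 then 1 else 0 := by
  rcases Nat.lt_or_ge s.card 2 with h | h
  · rw [if_pos (by omega)]
    have : univ.filter (fun σ : Equiv.Perm (Fin n) => σ.support ⊆ s) = {1} := by
      ext σ
      simp only [Finset.mem_filter, Finset.mem_univ, true_and, Finset.mem_singleton]
      constructor
      · intro hσ
        exact Equiv.Perm.card_support_le_one.mp
          (le_trans (Finset.card_le_card hσ) (by omega))
      · rintro rfl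
        simp
    rw [this]
    simp
  · rw [if_neg (by omega)]
    exact sum_sign_subset_zero s h

lemma sum_sign_support_eq {n : ℕ} (s : Finset (Fin n)) :
    ∑ σ ∈ univ.filter (fun σ : Equiv.Perm (Fin n) => σ.support = s),
      (Equiv.Perm.sign σ : ℤ) = cval s.card := by
  induction s using Finset.strongInduction with
  | _ s ih =>
    -- partition the subset-sum by exact support
    have hmap : ∀ σ ∈ univ.filter (fun σ : Equiv.Perm (Fin n) => σ.support ⊆ s),
        σ.support ∈ s.powerset := by
      intro σ hσ
      simp only [Finset.mem_filter] at hσ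
      exact Finset.mem_powerset.mpr hσ.2
    have hpart := Finset.sum_fiberwise_of_maps_to hmap
      (fun σ : Equiv.Perm (Fin n) => (Equiv.Perm.sign σ : ℤ))
    have hfiber : ∀ u ∈ s.powerset,
        (univ.filter (fun σ : Equiv.Perm (Fin n) => σ.support ⊆ s)).filter
          (fun σ => σ.support = u)
        = univ.filter (fun σ : Equiv.Perm (Fin n) => σ.support = u) := by
      intro u hu
      rw [Finset.mem_powerset] at hu
      ext σ
      simp only [Finset.mem_filter, Finset.mem_univ, true_and]
      constructor
      · exact fun h => h.2
      · intro h; exact ⟨h ▸ hu, h⟩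
    replace hpart : ∑ u ∈ s.powerset,
        (∑ σ ∈ univ.filter (fun σ : Equiv.Perm (Fin n) => σ.support = u),
          (Equiv.Perm.sign σ : ℤ)) = if s.card ≤ 1 then 1 else 0 := by
      rw [← sum_sign_subset s, ← hpart]
      exact Finset.sum_congr rfl (fun u hu => by rw [hfiber u hu])
    -- split off u = s
    have hs_mem : s ∈ s.powerset := Finset.mem_powerset.mpr subset_rfl
    rw [← Finset.sum_erase_add _ _ hs_mem] at hpart
    have herase : ∑ u ∈ s.powerset.erase s,
        (∑ σ ∈ univ.filter (fun σ : Equiv.Perm (Fin n) => σ.support = u),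
          (Equiv.Perm.sign σ : ℤ))
        = ∑ u ∈ s.powerset.erase s, cval u.card := by
      apply Finset.sum_congr rfl
      intro u hu
      rw [Finset.mem_erase, Finset.mem_powerset] at hu
      exact ih u (lt_of_le_of_ne hu.2 hu.1)
    rw [herase] at hpart
    -- group the erase-sum by cardinality
    have hmap2 : ∀ u ∈ s.powerset.erase s, u.card ∈ range s.card := by
      intro u hu
      rw [Finset.mem_erase, Finset.mem_powerset] at hu
      rw [Finset.mem_range]
      exact Finset.card_lt_card (lt_of_le_of_ne hu.2 hu.1)
    have hgroup := Finset.sum_fiberwise_of_maps_to hmap2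
      (fun u : Finset (Fin n) => cval u.card)
    have hfib2 : ∀ j ∈ range s.card,
        ∑ u ∈ (s.powerset.erase s).filter (fun u => u.card = j), cval u.card
        = (s.card.choose j : ℤ) * cval j := by
      intro j hj
      rw [Finset.mem_range] at hj
      have : (s.powerset.erase s).filter (fun u => u.card = j) = s.powersetCard j := by
        rw [Finset.powersetCard_eq_filter]
        ext u
        simp only [Finset.mem_filter, Finset.mem_erase, Finset.mem_powerset]
        constructor
        · rintro ⟨⟨_, h2⟩, h3⟩; exact ⟨h2, h3⟩
        · rintro ⟨h2, h3⟩
          refine ⟨⟨?_, h2⟩, h3⟩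
          rintro rfl; omega
      rw [this]
      have hc : ∑ u ∈ s.powersetCard j, cval u.card = ∑ u ∈ s.powersetCard j, cval j :=
        Finset.sum_congr rfl (fun u hu => by rw [(Finset.mem_powersetCard.mp hu).2])
      rw [hc, Finset.sum_const, Finset.card_powersetCard, nsmul_eq_mul]
    rw [← hgroup, Finset.sum_congr rfl hfib2] at hpart
    -- now use the binomial identity
    have hb := binom_id s.card
    rw [Finset.sum_range_succ, Nat.choose_self] at hb
    omega

/-- For `2 ≤ t ≤ n`, the sum of the signs of all permutations of support size `t` equals
`(-1)^(t-1) · (t-1) · C(n,t)`. -/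
theorem stmt9 (n t : ℕ) (hn : 2 ≤ n) (ht2 : 2 ≤ t) (htn : t ≤ n) :
    ∑ σ ∈ univ.filter (fun σ : Equiv.Perm (Fin n) => σ.support.card = t),
        (Equiv.Perm.sign σ : ℤ) =
      (-1) ^ (t - 1) * ((t : ℤ) - 1) * n.choose t := by
  have hmap : ∀ σ ∈ univ.filter (fun σ : Equiv.Perm (Fin n) => σ.support.card = t),
      σ.support ∈ (univ : Finset (Fin n)).powersetCard t := by
    intro σ hσ
    rw [Finset.mem_powersetCard]
    exact ⟨Finset.subset_univ _, (Finset.mem_filter.mp hσ).2⟩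
  have hpart := Finset.sum_fiberwise_of_maps_to hmap
    (fun σ : Equiv.Perm (Fin n) => (Equiv.Perm.sign σ : ℤ))
  rw [← hpart]
  have hfib : ∀ u ∈ (univ : Finset (Fin n)).powersetCard t,
      ∑ σ ∈ (univ.filter (fun σ : Equiv.Perm (Fin n) => σ.support.card = t)).filter
          (fun σ => σ.support = u), (Equiv.Perm.sign σ : ℤ) = cval t := by
    intro u hu
    have hcard := (Finset.mem_powersetCard.mp hu).2
    have heq : (univ.filter (fun σ : Equiv.Perm (Fin n) => σ.support.card = t)).filter
        (fun σ => σ.support = u) = univ.filter (fun σ : Equiv.Perm (Fin n) => σ.support = u) := by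
      ext σ
      simp only [Finset.mem_filter, Finset.mem_univ, true_and]
      constructor
      · exact fun h => h.2
      · intro h; exact ⟨by rw [h, hcard], h⟩
    rw [heq, sum_sign_support_eq, hcard]
  rw [Finset.sum_congr rfl hfib, Finset.sum_const, Finset.card_powersetCard,
    Finset.card_univ, Fintype.card_fin, nsmul_eq_mul]
  obtain ⟨m, rfl⟩ : ∃ m, t = m + 1 := ⟨t - 1, by omega⟩
  unfold cval
  simp only [Nat.add_sub_cancel, pow_succ]
  push_cast
  ring
end

section
/- For every integer n ≥ 7 and every integer t with 2 ≤ t ≤ n−2, let Δ(t) = (n−t−1)·C(n,t)·D(t) − (n−1)·(−1)^{t−1}·(t−1)·C(n,t). Then Δ(3) = −n(n−1)(n−2), and Δ(t) ≥ n(n−1)(n−2) for every such t with t ≠ 3, where C(n,t) is the binomial coefficient. -/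
open Finset

lemma aux_choose_half (n : ℕ) : ∀ t, 2 ≤ t → t ≤ n / 2 → n.choose 2 ≤ n.choose t := by
  intro t h2 hle
  induction t, h2 using Nat.le_induction with
  | base => exact le_refl _
  | succ k hk ih =>
    have hk2 : k < n / 2 := lt_of_lt_of_le (Nat.lt_succ_self k) hle
    exact le_trans (ih (le_of_lt hk2)) (Nat.choose_le_succ_of_lt_half_left hk2)

lemma aux_choose_two_le (n t : ℕ) (h2 : 2 ≤ t) (htn : t ≤ n - 2) (hn : 7 ≤ n) :
    n.choose 2 ≤ n.choose t := by
  rcases le_or_gt t (n / 2) with h | h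
  · exact aux_choose_half n t h2 h
  · have htn' : t ≤ n := le_trans htn (Nat.sub_le n 2)
    rw [← Nat.choose_symm htn']
    exact aux_choose_half n (n - t) (by omega) (by omega)

lemma aux_D_mono (s : ℕ) (hs : 1 ≤ s) :
    s * numDerangements s ≤ numDerangements (s + 1) := by
  obtain ⟨k, rfl⟩ := Nat.exists_eq_add_of_le hs
  rw [add_comm 1 k, numDerangements_add_two]
  nlinarith [Nat.zero_le (numDerangements k)]

lemma aux_D_lb : ∀ t, 5 ≤ t → t * t + 2 * t ≤ numDerangements t + 1 := by
  intro t ht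
  induction t, ht using Nat.le_induction with
  | base => decide
  | succ k hk ih =>
    have h1 := aux_D_mono k (by omega)
    nlinarith

lemma aux_choose2 (n : ℕ) (hn : 2 ≤ n) : ((n.choose 2 : ℤ)) * 2 = n * (n - 1) := by
  have : n.choose 2 * 2 = n * (n - 1) := by
    rw [Nat.choose_two_right, Nat.div_mul_cancel (Nat.even_mul_pred_self n).two_dvd]
  have := congrArg (Nat.cast (R := ℤ)) this
  push_cast [Nat.cast_sub (by omega : 1 ≤ n)] at this
  linarith

lemma aux_choose3 (n : ℕ) (hn : 3 ≤ n) : ((n.choose 3 : ℤ)) * 6 = n * (n - 1) * (n - 2) := by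
  induction n with
  | zero => omega
  | succ m ih =>
    rcases Nat.lt_or_ge m 3 with h | h
    · interval_cases m <;> first | omega | norm_num [Nat.choose]
    · have h2 : ((m.choose 2 : ℤ)) * 2 = m * (m - 1) := aux_choose2 m (by omega)
      have ih' := ih (by omega)
      rw [Nat.choose_succ_succ]
      push_cast
      push_cast at ih' h2
      ring_nf
      ring_nf at ih' h2
      nlinarith [ih', h2]

/-- For `n ≥ 7` and `2 ≤ t ≤ n-2`, with
`Δ(t) = (n-t-1)·C(n,t)·D(t) - (n-1)·(-1)^(t-1)·(t-1)·C(n,t)`, one has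
`Δ(3) = -n(n-1)(n-2)` and `Δ(t) ≥ n(n-1)(n-2)` for `t ≠ 3`. -/
theorem stmt10 (n : ℕ) (hn : 7 ≤ n) (t : ℕ) (ht2 : 2 ≤ t) (htn : t ≤ n - 2) :
    (t = 3 →
      ((n : ℤ) - t - 1) * (n.choose t) * (numDerangements t) -
          ((n : ℤ) - 1) * (-1) ^ (t - 1) * ((t : ℤ) - 1) * (n.choose t) =
        -((n : ℤ) * ((n : ℤ) - 1) * ((n : ℤ) - 2))) ∧
    (t ≠ 3 →
      (n : ℤ) * ((n : ℤ) - 1) * ((n : ℤ) - 2) ≤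
        ((n : ℤ) - t - 1) * (n.choose t) * (numDerangements t) -
          ((n : ℤ) - 1) * (-1) ^ (t - 1) * ((t : ℤ) - 1) * (n.choose t)) := by
  have htn2 : t + 2 ≤ n := by omega
  have hnZ : (7 : ℤ) ≤ n := by exact_mod_cast hn
  have htZ : (2 : ℤ) ≤ t := by exact_mod_cast ht2
  have hm1 : (t : ℤ) + 2 ≤ n := by exact_mod_cast htn2
  have hC2 : ((n.choose 2 : ℤ)) * 2 = n * (n - 1) := aux_choose2 n (by omega)
  have hCle : ((n.choose 2 : ℤ)) ≤ (n.choose t : ℤ) := by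
    exact_mod_cast aux_choose_two_le n t ht2 htn hn
  have hC2pos : (0 : ℤ) < (n.choose 2 : ℤ) := by
    exact_mod_cast Nat.choose_pos (by omega : 2 ≤ n)
  have hD0 : (0 : ℤ) ≤ (numDerangements t : ℤ) := by positivity
  constructor
  · rintro rfl
    have hD3 : (numDerangements 3 : ℤ) = 2 := by decide
    have hC3 := aux_choose3 n (by omega)
    rw [hD3]
    norm_num
    linarith [hC3]
  · intro hne
    rcases eq_or_lt_of_le ht2 with h2 | h4
    · -- t = 2
      subst h2
      have hD2 : (numDerangements 2 : ℤ) = 1 := by decide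
      rw [hD2]
      norm_num
      nlinarith [hC2, hCle, hnZ]
    · have ht4 : 4 ≤ t := by omega
      rcases Nat.even_or_odd t with hev | hodd
      · -- even t : (-1)^(t-1) = -1
        have hodd1 : Odd (t - 1) := Nat.Even.sub_odd (by omega) hev odd_one
        rw [hodd1.neg_one_pow]
        have ht4Z : (4 : ℤ) ≤ t := by exact_mod_cast ht4
        have key : (n : ℤ) * (n - 1) * (n - 2) ≤ ((n : ℤ) - 1) * ((t : ℤ) - 1) * (n.choose t) := by
          have h1 : ((n : ℤ) - 1) * ((t : ℤ) - 1) * (n.choose 2 : ℤ) ≤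
              ((n : ℤ) - 1) * ((t : ℤ) - 1) * (n.choose t : ℤ) :=
            mul_le_mul_of_nonneg_left hCle (by nlinarith)
          have hp1 : (0:ℤ) ≤ ((n : ℤ) - 1) * ((t : ℤ) - 4) * (n.choose 2 : ℤ) := by
            apply mul_nonneg (mul_nonneg (by linarith) (by linarith)) hC2pos.le
          have hc : 3 * ((n:ℤ) - 1) * ((n.choose 2 : ℤ)) * 2 =
              3 * ((n:ℤ) - 1) * ((n:ℤ) * ((n:ℤ) - 1)) := by
            linear_combination 3 * ((n:ℤ) - 1) * hC2
          have hnn : (0:ℤ) ≤ (n:ℤ) * ((n:ℤ) - 1) * ((n:ℤ) + 1) := by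
            apply mul_nonneg (mul_nonneg (by linarith) (by linarith)) (by linarith)
          linarith [h1, hp1, hc, hnn]
        have hmCD : (0 : ℤ) ≤ ((n : ℤ) - t - 1) * (n.choose t) * (numDerangements t) := by
          have h0 : (0:ℤ) ≤ (n : ℤ) - t - 1 := by linarith
          have h0' : (0:ℤ) ≤ (n.choose t : ℤ) := by positivity
          exact mul_nonneg (mul_nonneg h0 h0') hD0
        linarith [key, hmCD]
      · -- odd t, t ≥ 5 : (-1)^(t-1) = 1
        have ht5 : 5 ≤ t := by obtain ⟨k, hk⟩ := hodd; omega
        have ht5Z : (5 : ℤ) ≤ t := by exact_mod_cast ht5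
        have hev1 : Even (t - 1) := Nat.Odd.sub_odd hodd odd_one
        rw [hev1.neg_one_pow]
        have hD : ((t : ℤ) * t + 2 * t) ≤ (numDerangements t : ℤ) + 1 := by
          exact_mod_cast aux_D_lb t ht5
        have hinner : 2 * ((n : ℤ) - 2) ≤
            ((n : ℤ) - t - 1) * (numDerangements t : ℤ) - ((n : ℤ) - 1) * ((t : ℤ) - 1) := by
          nlinarith [mul_nonneg (by linarith : (0:ℤ) ≤ (n : ℤ) - t - 1 - 1)
              (by nlinarith : (0:ℤ) ≤ (t : ℤ) * t + t - 2),
            mul_nonneg (by linarith : (0:ℤ) ≤ (n : ℤ) - t - 1)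
              (by linarith : (0:ℤ) ≤ (numDerangements t : ℤ) - ((t:ℤ) * t + 2 * t - 1))]
        have h2 : ((n.choose 2 : ℤ)) * (2 * ((n : ℤ) - 2)) ≤
            (n.choose t : ℤ) * (((n : ℤ) - t - 1) * (numDerangements t : ℤ) -
              ((n : ℤ) - 1) * ((t : ℤ) - 1)) :=
          mul_le_mul hCle hinner (by linarith) (by positivity)
        have h3 : (n : ℤ) * (n - 1) * (n - 2) = ((n.choose 2 : ℤ)) * (2 * ((n : ℤ) - 2)) := by
          linear_combination (2 - (n : ℤ)) * hC2
        linarith [h2, h3]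
end

section
/- For every integer n ≥ 7 and every nonempty subset I of {2,3,…,n−2} with I ≠ {3}, one has Σ_{σ∈T(n,I)} (fix(σ)−1) ≥ (n−1)·Σ_{σ∈T(n,I)} sgn(σ), where sgn(σ) is 1 if σ is even and −1 if σ is odd. -/
open Finset

section AuxStmt11
open Equiv Equiv.Perm

/-- Signed count of derangements of `Fin k`. -/
noncomputable def sd (k : ℕ) : ℤ :=
  ∑ τ ∈ univ.filter (fun τ : Perm (Fin k) => ∀ x, τ x ≠ x), (Perm.sign τ : ℤ)

lemma card_der (β : Type*) [Fintype β] [DecidableEq β] :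
    (univ.filter (fun τ : Perm β => ∀ x, τ x ≠ x)).card
      = numDerangements (Fintype.card β) := by
  rw [← card_derangements_eq_numDerangements]
  rw [← Fintype.card_subtype]
  apply Fintype.card_congr
  exact Equiv.refl _

lemma sum_sign_der (β : Type*) [Fintype β] [DecidableEq β] :
    ∑ τ ∈ univ.filter (fun τ : Perm β => ∀ x, τ x ≠ x), (Perm.sign τ : ℤ)
      = sd (Fintype.card β) := by
  obtain e := Fintype.equivFin β
  rw [sd]
  refine Finset.sum_bij (fun τ _ => e.permCongr τ) ?_ ?_ ?_ ?_
  · intro τ hτ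
    simp only [mem_filter, mem_univ, true_and] at hτ ⊢
    intro x
    simp only [Equiv.permCongr_apply]
    intro h
    exact hτ (e.symm x) (e.injective (by simpa using h))
  · intro a ha b hb h
    have := congrArg (fun f => e.symm.permCongr f) h
    simpa [Equiv.permCongr_trans] using this
  · intro τ hτ
    refine ⟨e.symm.permCongr τ, ?_, ?_⟩
    · simp only [mem_filter, mem_univ, true_and] at hτ ⊢
      intro x
      simp only [Equiv.permCongr_apply, Equiv.symm_symm]
      intro h
      exact hτ (e x) (e.symm.injective (by simpa using h))
    · ext x
      simp
  · intro τ hτ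
    rw [Equiv.Perm.sign_permCongr]

lemma sum_support_fiber {α : Type*} [Fintype α] [DecidableEq α] {M : Type*} [AddCommMonoid M]
    (s : Finset α) (f : Perm α → M) :
    ∑ σ ∈ univ.filter (fun σ : Perm α => σ.support = s), f σ
      = ∑ τ ∈ univ.filter (fun τ : Perm {x // x ∈ s} => ∀ x, τ x ≠ x), f (ofSubtype τ) := by
  refine (Finset.sum_bij (fun τ _ => ofSubtype τ) ?_ ?_ ?_ ?_).symm
  · intro τ hτ
    simp only [mem_filter, mem_univ, true_and] at hτ ⊢
    ext x
    simp only [Equiv.Perm.mem_support]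
    constructor
    · intro h
      by_contra hx
      exact h (ofSubtype_apply_of_not_mem τ hx)
    · intro hx
      rw [ofSubtype_apply_of_mem τ hx]
      intro h
      exact hτ ⟨x, hx⟩ (Subtype.ext h)
  · intro a ha b hb h
    ext x
    have := congrFun (congrArg (fun (g : Perm α) => (g : α → α)) h) x
    simp only [ofSubtype_apply_coe] at this
    exact this
  · intro σ hσ
    simp only [mem_filter, mem_univ, true_and] at hσ
    have h₁ : ∀ x, x ∈ s ↔ σ x ∈ s := by
      intro x
      rw [← hσ]
      exact Equiv.Perm.apply_mem_support.symm
    refine ⟨σ.subtypePerm (fun x => (h₁ x).symm), ?_, ?_⟩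
    · simp only [mem_filter, mem_univ, true_and]
      intro x h
      have hx : σ (x : α) ≠ x := by
        rw [← Equiv.Perm.mem_support, hσ]
        exact x.2
      exact hx (congrArg Subtype.val h)
    · refine ofSubtype_subtypePerm (fun x => (h₁ x).symm) ?_
      intro x hx
      rw [← hσ]
      exact Equiv.Perm.mem_support.mpr hx
  · intro τ hτ
    rfl

lemma sum_sign_supp (n k : ℕ) :
    ∑ σ ∈ univ.filter (fun σ : Perm (Fin n) => σ.support.card = k), (Perm.sign σ : ℤ)
      = (n.choose k : ℤ) * sd k := by
  have h := Finset.sum_fiberwise_eq_sum_filter univ (powersetCard k (univ : Finset (Fin n)))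
    (fun σ : Perm (Fin n) => σ.support) (fun σ => (Perm.sign σ : ℤ))
  have hfil : univ.filter (fun σ : Perm (Fin n) => σ.support ∈ powersetCard k univ)
      = univ.filter (fun σ : Perm (Fin n) => σ.support.card = k) := by
    apply filter_congr
    intro σ _
    simp [Finset.mem_powersetCard_univ]
  rw [hfil] at h
  rw [← h]
  have hval : ∀ s ∈ powersetCard k (univ : Finset (Fin n)),
      ∑ σ ∈ univ.filter (fun σ : Perm (Fin n) => σ.support = s), (Perm.sign σ : ℤ) = sd k := by
    intro s hs
    rw [Finset.mem_powersetCard_univ] at hs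
    rw [sum_support_fiber s (fun σ => (Perm.sign σ : ℤ))]
    have : ∀ τ : Perm {x // x ∈ s}, (Perm.sign (ofSubtype τ) : ℤ) = (Perm.sign τ : ℤ) := by
      intro τ
      rw [Subsingleton.elim (Finset.Subtype.fintype s) (Subtype.fintype fun x => x ∈ s)]
      convert congrArg (fun u : ℤˣ => (u : ℤ)) (Equiv.Perm.sign_ofSubtype τ)
    rw [Finset.sum_congr rfl (fun τ _ => this τ), sum_sign_der, Fintype.card_coe, hs]
  rw [Finset.sum_congr rfl hval, Finset.sum_const, Finset.card_powersetCard, card_fin]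
  simp [mul_comm]

lemma card_supp (n k : ℕ) :
    (univ.filter (fun σ : Perm (Fin n) => σ.support.card = k)).card
      = n.choose k * numDerangements k := by
  have h := Finset.sum_card_fiberwise_eq_card_filter (univ : Finset (Perm (Fin n)))
    (powersetCard k (univ : Finset (Fin n))) (fun σ => σ.support)
  have hfil : univ.filter (fun σ : Perm (Fin n) => σ.support ∈ powersetCard k univ)
      = univ.filter (fun σ : Perm (Fin n) => σ.support.card = k) := by
    apply filter_congr
    intro σ _
    simp [Finset.mem_powersetCard_univ]
  rw [hfil] at h
  rw [← h]
  have hval : ∀ s ∈ powersetCard k (univ : Finset (Fin n)),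
      (univ.filter (fun σ : Perm (Fin n) => σ.support = s)).card = numDerangements k := by
    intro s hs
    rw [Finset.mem_powersetCard_univ] at hs
    have := sum_support_fiber (M := ℕ) s (fun _ => 1)
    rw [← Finset.card_eq_sum_ones, ← Finset.card_eq_sum_ones] at this
    rw [this, card_der, Fintype.card_coe, hs]
  rw [Finset.sum_congr rfl hval, Finset.sum_const, Finset.card_powersetCard, card_fin,
    smul_eq_mul]

lemma total_sign_zero (n : ℕ) (hn : 2 ≤ n) :
    ∑ σ : Perm (Fin n), (Perm.sign σ : ℤ) = 0 := by
  have hab : (⟨0, by omega⟩ : Fin n) ≠ ⟨1, by omega⟩ := by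
    simp [Fin.ext_iff]
  set τ := Equiv.swap (⟨0, by omega⟩ : Fin n) ⟨1, by omega⟩ with hτ
  have key : ∑ σ : Perm (Fin n), (Perm.sign σ : ℤ)
      = ∑ σ : Perm (Fin n), (Perm.sign (σ * τ) : ℤ) :=
    (Fintype.sum_equiv (Equiv.mulRight τ) _ _ (fun σ => rfl)).symm
  have hs : ∀ σ : Perm (Fin n), (Perm.sign (σ * τ) : ℤ) = -(Perm.sign σ : ℤ) := by
    intro σ
    rw [Equiv.Perm.sign_mul, Equiv.Perm.sign_swap hab]
    push_cast
    ring
  rw [Finset.sum_congr rfl (fun σ _ => hs σ), Finset.sum_neg_distrib] at key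
  linarith

lemma group_identity (n : ℕ) :
    ∑ σ : Perm (Fin n), (Perm.sign σ : ℤ)
      = ∑ k ∈ Finset.range (n + 1), (n.choose k : ℤ) * sd k := by
  have h := Finset.sum_fiberwise_eq_sum_filter univ (Finset.range (n + 1))
    (fun σ : Perm (Fin n) => σ.support.card) (fun σ => (Perm.sign σ : ℤ))
  have huniv : univ.filter (fun σ : Perm (Fin n) => σ.support.card ∈ Finset.range (n + 1))
      = univ := by
    apply Finset.filter_true_of_mem
    intro σ _
    rw [Finset.mem_range]
    have := Finset.card_le_card (Finset.subset_univ σ.support)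
    simpa using Nat.lt_succ_of_le this
  rw [huniv] at h
  rw [← h]
  exact Finset.sum_congr rfl (fun k _ => sum_sign_supp n k)

lemma binom_dd (p : ℕ) :
    ∑ k ∈ Finset.range (p + 2 + 1),
      ((p + 2).choose k : ℤ) * ((-1) ^ k * (1 - (k : ℤ))) = 0 := by
  have h1 : ∑ k ∈ Finset.range (p + 2 + 1), (-1 : ℤ) ^ k * (p + 2).choose k = 0 :=
    Int.alternating_sum_range_choose_of_ne (by omega)
  have h2 : ∑ k ∈ Finset.range (p + 2 + 1), (-1 : ℤ) ^ k * (k : ℤ) * (p + 2).choose k = 0 := by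
    rw [Finset.sum_range_succ']
    have key : ∀ j, (-1 : ℤ) ^ (j + 1) * ((j + 1 : ℕ) : ℤ) * (p + 2).choose (j + 1)
        = (-(p + 2) : ℤ) * ((-1) ^ j * (p + 1).choose j) := by
      intro j
      have hn : (p + 2) * (p + 1).choose j = (p + 2).choose (j + 1) * (j + 1) :=
        Nat.add_one_mul_choose_eq (p + 1) j
      have hc : ((p + 2 : ℕ) : ℤ) * ((p + 1).choose j : ℤ)
          = ((p + 2).choose (j + 1) : ℤ) * ((j + 1 : ℕ) : ℤ) := by exact_mod_cast hn
      push_cast at hc ⊢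
      rw [pow_succ]
      linear_combination ((-1 : ℤ) ^ j) * hc
    rw [Finset.sum_congr rfl (fun j _ => key j)]
    rw [← Finset.mul_sum]
    have h3 : ∑ j ∈ Finset.range (p + 2), (-1 : ℤ) ^ j * ((p + 1).choose j : ℤ) = 0 :=
      Int.alternating_sum_range_choose_of_ne (by omega)
    rw [h3]
    simp
  have hterm : ∀ k, ((p + 2).choose k : ℤ) * ((-1) ^ k * (1 - (k : ℤ)))
      = (-1 : ℤ) ^ k * (p + 2).choose k - (-1 : ℤ) ^ k * (k : ℤ) * (p + 2).choose k := by
    intro k; ring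
  rw [Finset.sum_congr rfl (fun k _ => hterm k), Finset.sum_sub_distrib, h1, h2]
  ring

lemma sd_zero : sd 0 = 1 := by
  have h := group_identity 0
  have hl : ∑ σ : Perm (Fin 0), (Perm.sign σ : ℤ) = 1 := by
    rw [Fintype.sum_subsingleton _ (1 : Perm (Fin 0))]
    simp
  rw [hl] at h
  simpa using h.symm

lemma sd_one : sd 1 = 0 := by
  have h := group_identity 1
  have hl : ∑ σ : Perm (Fin 1), (Perm.sign σ : ℤ) = 1 := by
    rw [Fintype.sum_subsingleton _ (1 : Perm (Fin 1))]
    simp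
  rw [hl, Finset.sum_range_succ, Finset.sum_range_one, sd_zero] at h
  simpa using h.symm

lemma sd_eq (m : ℕ) : sd m = (-1 : ℤ) ^ m * (1 - (m : ℤ)) := by
  induction m using Nat.strong_induction_on with
  | _ m ih =>
    match m, ih with
    | 0, _ => simpa using sd_zero
    | 1, _ => simpa using sd_one
    | (q + 2), ih =>
      have h := group_identity (q + 2)
      rw [total_sign_zero _ (by omega)] at h
      rw [Finset.sum_range_succ] at h
      have hih : ∀ k ∈ Finset.range (q + 2), ((q + 2).choose k : ℤ) * sd k
          = ((q + 2).choose k : ℤ) * ((-1 : ℤ) ^ k * (1 - (k : ℤ))) := by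
        intro k hk
        rw [ih k (Finset.mem_range.mp hk)]
      rw [Finset.sum_congr rfl hih] at h
      have hb := binom_dd q
      rw [Finset.sum_range_succ] at hb
      rw [Nat.choose_self] at h hb
      push_cast at h hb ⊢
      linarith

lemma nd2 : numDerangements 2 = 1 := by decide
lemma nd3 : numDerangements 3 = 2 := by decide
lemma nd4 : numDerangements 4 = 9 := by decide
lemma nd5 : numDerangements 5 = 44 := by decide

lemma nd_lb_aux : ∀ p : ℕ, (p + 6) ^ 2 ≤ numDerangements (p + 5)
    ∧ (p + 7) ^ 2 ≤ numDerangements (p + 6) := by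
  intro p
  induction p with
  | zero => constructor <;> decide
  | succ q ih =>
    obtain ⟨h1, h2⟩ := ih
    refine ⟨h2, ?_⟩
    have hrec : numDerangements (q + 7) = (q + 6) * (numDerangements (q + 5)
        + numDerangements (q + 6)) := numDerangements_add_two (q + 5)
    rw [hrec]
    nlinarith [h1, h2]

lemma nd_lb (k : ℕ) (hk : 5 ≤ k) : (k + 1) ^ 2 ≤ numDerangements k := by
  obtain ⟨p, rfl⟩ : ∃ p, k = p + 5 := ⟨k - 5, by omega⟩
  have := (nd_lb_aux p).1
  linarith

lemma choose_le_choose_succ (n b : ℕ) (h : 2 * b + 1 ≤ n) :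
    n.choose b ≤ n.choose (b + 1) := by
  have he : n.choose (b + 1) * (b + 1) = n.choose b * (n - b) := Nat.choose_succ_right_eq n b
  have hnb : b + 1 ≤ n - b := by omega
  have : n.choose b * (b + 1) ≤ n.choose (b + 1) * (b + 1) := by
    rw [he]
    exact Nat.mul_le_mul_left _ hnb
  exact Nat.le_of_mul_le_mul_right this (by omega)

lemma choose_mono_half (n a : ℕ) : ∀ b, a ≤ b → 2 * b ≤ n + 1 → n.choose a ≤ n.choose b := by
  intro b
  induction b with
  | zero =>
    intro hab _
    have : a = 0 := by omega
    rw [this]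
  | succ c ih =>
    intro hab hb
    rcases Nat.lt_or_ge a (c + 1) with h | h
    · have h1 : n.choose a ≤ n.choose c := ih (by omega) (by omega)
      have h2 : n.choose c ≤ n.choose (c + 1) := choose_le_choose_succ n c (by omega)
      omega
    · have : a = c + 1 := by omega
      rw [this]

lemma choose3_le (n k : ℕ) (h3 : 3 ≤ k) (hk : k ≤ n - 3) (hn : 7 ≤ n) :
    n.choose 3 ≤ n.choose k := by
  rcases le_or_gt (2 * k) (n + 1) with h | h
  · exact choose_mono_half n 3 k h3 h
  · have hkn : k ≤ n := by omega
    have hsym : n.choose (n - k) = n.choose k := Nat.choose_symm hkn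
    rw [← hsym]
    exact choose_mono_half n 3 (n - k) (by omega) (by omega)

lemma fix_card (n : ℕ) (σ : Perm (Fin n)) : fixCount n σ + σ.support.card = n := by
  have h := Finset.card_filter_add_card_filter_not
    (s := (univ : Finset (Fin n))) (p := fun i => σ i = i)
  rw [Finset.card_univ, Fintype.card_fin] at h
  rw [fixCount, Equiv.Perm.support]
  convert h using 2

noncomputable def tA (n k : ℕ) : ℤ :=
  ∑ σ ∈ univ.filter (fun σ : Perm (Fin n) => σ.support.card = k),
    ((fixCount n σ : ℤ) - 1 - ((n : ℤ) - 1) * (Perm.sign σ : ℤ))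

lemma tA_eq (n k : ℕ) :
    tA n k = (n.choose k : ℤ) *
      ((((n : ℤ) - k - 1) * numDerangements k) - ((n : ℤ) - 1) * sd k) := by
  rw [tA]
  rw [Finset.sum_sub_distrib]
  rw [← Finset.mul_sum, sum_sign_supp]
  have hconst : ∀ σ ∈ univ.filter (fun σ : Perm (Fin n) => σ.support.card = k),
      ((fixCount n σ : ℤ) - 1) = ((n : ℤ) - k - 1) := by
    intro σ hσ
    rw [Finset.mem_filter] at hσ
    have := fix_card n σ
    have hk : (σ.support.card : ℤ) = k := by exact_mod_cast hσ.2
    have : (fixCount n σ : ℤ) + (σ.support.card : ℤ) = n := by exact_mod_cast this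
    linarith
  rw [Finset.sum_congr rfl hconst, Finset.sum_const, card_supp]
  push_cast
  ring

lemma sd_abs (k : ℕ) (hk : 1 ≤ k) : sd k ≤ (k : ℤ) - 1 ∧ -((k : ℤ) - 1) ≤ sd k := by
  rw [sd_eq]
  rcases neg_one_pow_eq_or ℤ k with h | h <;> rw [h] <;> constructor <;>
    [skip; skip; skip; skip] <;>
    · have : (1 : ℤ) ≤ (k : ℤ) := by exact_mod_cast hk
      nlinarith

lemma key3 (n : ℕ) : tA n 3 = -(6 * (n.choose 3 : ℤ)) := by
  rw [tA_eq, nd3]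
  have h3 : sd 3 = 2 := by rw [sd_eq]; norm_num
  rw [h3]
  push_cast
  ring

set_option maxHeartbeats 1000000 in
lemma key_ge (n k : ℕ) (hn : 7 ≤ n) (h2 : 2 ≤ k) (hk : k ≤ n - 2) (h3 : k ≠ 3) :
    6 * (n.choose 3 : ℤ) ≤ tA n k := by
  rw [tA_eq]
  have hC3 : (0 : ℤ) < (n.choose 3 : ℤ) := by
    exact_mod_cast Nat.choose_pos (by omega : 3 ≤ n)
  have hc3 : (n.choose 3 : ℤ) * 3 = (n.choose 2 : ℤ) * ((n : ℤ) - 2) := by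
    have h := Nat.choose_succ_right_eq n 2
    have hcast : ((n.choose 3 * 3 : ℕ) : ℤ) = ((n.choose 2 * (n - 2) : ℕ) : ℤ) := by
      exact_mod_cast h
    push_cast [Nat.cast_sub (show 2 ≤ n by omega)] at hcast
    linarith
  rcases (by omega : k = 2 ∨ k = 4 ∨ k = 5 ∨ 6 ≤ k) with rfl | rfl | rfl | h6
  · -- k = 2
    rw [nd2]
    have hsd : sd 2 = -1 := by rw [sd_eq]; norm_num
    rw [hsd]
    push_cast
    linarith [hc3]
  · -- k = 4
    rw [nd4]
    have hsd : sd 4 = -3 := by rw [sd_eq]; norm_num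
    rw [hsd]
    have hc4 : (n.choose 4 : ℤ) * 4 = (n.choose 3 : ℤ) * ((n : ℤ) - 3) := by
      have h := Nat.choose_succ_right_eq n 3
      have hcast : ((n.choose 4 * 4 : ℕ) : ℤ) = ((n.choose 3 * (n - 3) : ℕ) : ℤ) := by
        exact_mod_cast h
      push_cast [Nat.cast_sub (show 3 ≤ n by omega)] at hcast
      linarith
    have hexp : (n.choose 4 : ℤ) * (((n : ℤ) - 4 - 1) * 9 - ((n : ℤ) - 1) * (-3))
        = 3 * ((n : ℤ) - 3) * ((n : ℤ) - 4) * (n.choose 3 : ℤ) := by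
      push_cast
      linear_combination (3 * ((n : ℤ) - 4)) * hc4
    have hfac : (6 : ℤ) ≤ 3 * ((n : ℤ) - 3) * ((n : ℤ) - 4) := by
      have h7 : (7 : ℤ) ≤ (n : ℤ) := by exact_mod_cast hn
      nlinarith
    push_cast
    nlinarith [hexp, mul_le_mul_of_nonneg_right hfac (le_of_lt hC3)]
  · -- k = 5
    rw [nd5]
    have hsd : sd 5 = 4 := by rw [sd_eq]; norm_num
    rw [hsd]
    have hc4 : (n.choose 4 : ℤ) * 4 = (n.choose 3 : ℤ) * ((n : ℤ) - 3) := by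
      have h := Nat.choose_succ_right_eq n 3
      have hcast : ((n.choose 4 * 4 : ℕ) : ℤ) = ((n.choose 3 * (n - 3) : ℕ) : ℤ) := by
        exact_mod_cast h
      push_cast [Nat.cast_sub (show 3 ≤ n by omega)] at hcast
      linarith
    have hc5 : (n.choose 5 : ℤ) * 5 = (n.choose 4 : ℤ) * ((n : ℤ) - 4) := by
      have h := Nat.choose_succ_right_eq n 4
      have hcast : ((n.choose 5 * 5 : ℕ) : ℤ) = ((n.choose 4 * (n - 4) : ℕ) : ℤ) := by
        exact_mod_cast h
      push_cast [Nat.cast_sub (show 4 ≤ n by omega)] at hcast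
      linarith
    have hexp : (n.choose 5 : ℤ) * (((n : ℤ) - 5 - 1) * 44 - ((n : ℤ) - 1) * 4)
        = ((n : ℤ) - 3) * ((n : ℤ) - 4) * (2 * (n : ℤ) - 13) * (n.choose 3 : ℤ) := by
      push_cast
      linear_combination (4 * (2 * (n : ℤ) - 13)) * hc5
        + (((n : ℤ) - 4) * (2 * (n : ℤ) - 13)) * hc4
    have hfac : (6 : ℤ) ≤ ((n : ℤ) - 3) * ((n : ℤ) - 4) * (2 * (n : ℤ) - 13) := by
      have h7 : (7 : ℤ) ≤ (n : ℤ) := by exact_mod_cast hn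
      nlinarith
    push_cast
    nlinarith [hexp, mul_le_mul_of_nonneg_right hfac (le_of_lt hC3)]
  · -- 6 ≤ k
    have hsd := sd_abs k (by omega)
    have hD : ((k : ℤ) + 1) ^ 2 ≤ (numDerangements k : ℤ) := by
      exact_mod_cast nd_lb k (by omega)
    have hkZ : (6 : ℤ) ≤ (k : ℤ) := by exact_mod_cast h6
    have hn7 : (7 : ℤ) ≤ (n : ℤ) := by exact_mod_cast hn
    rcases (by omega : k ≤ n - 3 ∨ k = n - 2) with hle | heq
    · -- k ≤ n - 3
      have hm : (2 : ℤ) ≤ (n : ℤ) - (k : ℤ) - 1 := by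
        have : k + 3 ≤ n := by omega
        have : (k : ℤ) + 3 ≤ (n : ℤ) := by exact_mod_cast this
        linarith
      have hX : (6 : ℤ) ≤ ((n : ℤ) - k - 1) * (numDerangements k : ℤ)
          - ((n : ℤ) - 1) * sd k := by
        have hpos : (0 : ℤ) ≤ (numDerangements k : ℤ) - ((k : ℤ) - 1) := by nlinarith
        have hmul : 2 * ((numDerangements k : ℤ) - ((k : ℤ) - 1))
            ≤ ((n : ℤ) - k - 1) * ((numDerangements k : ℤ) - ((k : ℤ) - 1)) :=
          mul_le_mul_of_nonneg_right hm hpos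
        nlinarith [hsd.1, hsd.2, hmul, hD]
      have hCle : (n.choose 3 : ℤ) ≤ (n.choose k : ℤ) := by
        exact_mod_cast choose3_le n k (by omega) hle hn
      calc (6 : ℤ) * (n.choose 3 : ℤ) ≤ (((n : ℤ) - k - 1) * (numDerangements k : ℤ)
            - ((n : ℤ) - 1) * sd k) * (n.choose k : ℤ) :=
          mul_le_mul hX hCle (le_of_lt hC3) (by linarith)
        _ = _ := by ring
    · -- k = n - 2
      have hkn : (k : ℤ) = (n : ℤ) - 2 := by omega
      have hsym : n.choose k = n.choose 2 := by
        rw [heq]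
        exact Nat.choose_symm (by omega)
      rw [hsym]
      have hC2 : (0 : ℤ) ≤ (n.choose 2 : ℤ) := by positivity
      have hX : 2 * ((n : ℤ) - 1) ≤ ((n : ℤ) - k - 1) * (numDerangements k : ℤ)
          - ((n : ℤ) - 1) * sd k := by
        rw [hkn]
        have h1 : ((n : ℤ) - ((n : ℤ) - 2) - 1) = 1 := by ring
        rw [h1, one_mul]
        have hD' : ((n : ℤ) - 1) ^ 2 ≤ (numDerangements k : ℤ) := by
          rw [hkn] at hD
          nlinarith [hD]
        have hs3 : sd k ≤ (n : ℤ) - 3 := by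
          have := hsd.1
          linarith
        have hb : ((n : ℤ) - 1) * sd k ≤ ((n : ℤ) - 1) * ((n : ℤ) - 3) :=
          mul_le_mul_of_nonneg_left hs3 (by linarith)
        nlinarith [hD', hb]
      have : 6 * (n.choose 3 : ℤ) = (n.choose 2 : ℤ) * (2 * ((n : ℤ) - 2)) := by
        linarith [hc3]
      rw [this]
      have h2 : (2 * ((n : ℤ) - 2)) ≤ 2 * ((n : ℤ) - 1) := by linarith
      calc (n.choose 2 : ℤ) * (2 * ((n : ℤ) - 2))
          ≤ (n.choose 2 : ℤ) * (2 * ((n : ℤ) - 1)) := by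
            exact mul_le_mul_of_nonneg_left h2 hC2
        _ ≤ _ := mul_le_mul_of_nonneg_left hX hC2

end AuxStmt11

section MainStmt11
open Equiv Equiv.Perm

/-- For every `n ≥ 7` and nonempty `I ⊆ {2, …, n-2}` with `I ≠ {3}`,
`Σ_{σ ∈ T(n,I)} (fix(σ) - 1) ≥ (n-1) · Σ_{σ ∈ T(n,I)} sgn(σ)`. -/
theorem stmt11 (n : ℕ) (hn : 7 ≤ n) (I : Finset ℕ) (hne : I.Nonempty)
    (hI : I ⊆ Finset.Icc 2 (n - 2)) (hI3 : I ≠ {3}) :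
    ((n : ℤ) - 1) * ∑ σ ∈ T n I, ((Equiv.Perm.sign σ : ℤ)) ≤
      ∑ σ ∈ T n I, ((fixCount n σ : ℤ) - 1) := by
  have hfib := Finset.sum_fiberwise_eq_sum_filter univ I
    (fun σ : Perm (Fin n) => σ.support.card)
    (fun σ : Perm (Fin n) => ((fixCount n σ : ℤ) - 1 - ((n : ℤ) - 1) * (Perm.sign σ : ℤ)))
  have hT : (univ.filter fun σ : Perm (Fin n) => σ.support.card ∈ I) = T n I := rfl
  rw [hT] at hfib
  have hsum0 : 0 ≤ ∑ σ ∈ T n I,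
      ((fixCount n σ : ℤ) - 1 - ((n : ℤ) - 1) * (Perm.sign σ : ℤ)) := by
    rw [← hfib]
    have heq : ∀ k ∈ I, (∑ σ ∈ univ.filter (fun σ : Perm (Fin n) => σ.support.card = k),
        ((fixCount n σ : ℤ) - 1 - ((n : ℤ) - 1) * (Perm.sign σ : ℤ))) = tA n k :=
      fun k _ => rfl
    rw [Finset.sum_congr rfl heq]
    have hC3 : (0 : ℤ) ≤ 6 * (n.choose 3 : ℤ) := by positivity
    have hkey : ∀ k ∈ I, k ≠ 3 → 6 * (n.choose 3 : ℤ) ≤ tA n k := by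
      intro k hkI hk3
      have hmem := hI hkI
      rw [Finset.mem_Icc] at hmem
      exact key_ge n k hn hmem.1 hmem.2 hk3
    by_cases h3 : 3 ∈ I
    · obtain ⟨k0, hk0I, hk03⟩ : ∃ k0, k0 ∈ I ∧ k0 ≠ 3 := by
        by_contra hcon
        push_neg at hcon
        exact hI3 (Finset.eq_singleton_iff_unique_mem.mpr ⟨h3, hcon⟩)
      set lb : ℕ → ℤ := fun k =>
        if k = 3 then -(6 * (n.choose 3 : ℤ)) else
          if k = k0 then 6 * (n.choose 3 : ℤ) else 0 with hlb
      have hle : ∀ k ∈ I, lb k ≤ tA n k := by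
        intro k hkI
        by_cases hk3 : k = 3
        · subst hk3
          rw [key3]
          simp [hlb]
        · have h6 := hkey k hkI hk3
          by_cases hkk0 : k = k0
          · subst hkk0
            simp only [hlb, if_neg hk3, if_pos rfl]
            exact h6
          · simp only [hlb, if_neg hk3, if_neg hkk0]
            linarith
      have hsub : ({3, k0} : Finset ℕ) ⊆ I := by
        intro x hx
        rcases Finset.mem_insert.mp hx with rfl | hx
        · exact h3
        · rw [Finset.mem_singleton] at hx
          subst hx
          exact hk0I
      have hlbsum : ∑ k ∈ I, lb k = 0 := by
        rw [← Finset.sum_subset hsub (fun x hxI hxn => ?_)]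
        · rw [Finset.sum_insert (by simp [Ne.symm hk03]), Finset.sum_singleton]
          simp [hlb, hk03]
        · simp only [Finset.mem_insert, Finset.mem_singleton] at hxn
          push_neg at hxn
          simp [hlb, hxn.1, hxn.2]
      calc (0 : ℤ) = ∑ k ∈ I, lb k := hlbsum.symm
        _ ≤ ∑ k ∈ I, tA n k := Finset.sum_le_sum hle
    · apply Finset.sum_nonneg
      intro k hkI
      have hk3 : k ≠ 3 := fun h => h3 (h ▸ hkI)
      linarith [hkey k hkI hk3]
  have hsplit : ∑ σ ∈ T n I,
      ((fixCount n σ : ℤ) - 1 - ((n : ℤ) - 1) * (Perm.sign σ : ℤ))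
      = (∑ σ ∈ T n I, ((fixCount n σ : ℤ) - 1))
        - ((n : ℤ) - 1) * ∑ σ ∈ T n I, (Perm.sign σ : ℤ) := by
    rw [Finset.sum_sub_distrib, Finset.mul_sum]
  rw [hsplit] at hsum0
  linarith

end MainStmt11
end

section
/- For every n ≥ 6 and every conjugacy class S of S_n consisting of derangements (i.e., fix(σ) = 0 for all σ ∈ S), the Cayley graph Cay(S_n,S) has an eigenvalue λ with 0 < λ < |S|. -/
open Finset

namespace Stmt18Aux

variable {n : ℕ}

lemma exists_map2 {α : Type*} [DecidableEq α] {a b c d : α} (hab : a ≠ b) (hcd : c ≠ d) :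
    ∃ g : Equiv.Perm α, g a = c ∧ g b = d := by
  classical
  have hb'c : Equiv.swap a c b ≠ c := by
    rcases eq_or_ne b c with rfl | h
    · rw [Equiv.swap_apply_right]
      intro h'; exact hab h'
    · rw [Equiv.swap_apply_of_ne_of_ne hab.symm h]; exact h
  refine ⟨Equiv.swap (Equiv.swap a c b) d * Equiv.swap a c, ?_, ?_⟩
  · simp only [Equiv.Perm.mul_apply, Equiv.swap_apply_left]
    exact Equiv.swap_apply_of_ne_of_ne hb'c.symm hcd
  · simp only [Equiv.Perm.mul_apply, Equiv.swap_apply_left]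

lemma exists_fix2 {α : Type*} [DecidableEq α] {i0 i1 a b c d : α}
    (hab : a ≠ b) (hcd : c ≠ d)
    (ha0 : a ≠ i0) (ha1 : a ≠ i1) (hb0 : b ≠ i0) (hb1 : b ≠ i1)
    (hc0 : c ≠ i0) (hc1 : c ≠ i1) (hd0 : d ≠ i0) (hd1 : d ≠ i1) :
    ∃ g : Equiv.Perm α, g i0 = i0 ∧ g i1 = i1 ∧ g a = c ∧ g b = d := by
  classical
  have hb'cases : Equiv.swap a c b = a ∨ Equiv.swap a c b = b := by
    rcases eq_or_ne b c with rfl | h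
    · left; rw [Equiv.swap_apply_right]
    · right; rw [Equiv.swap_apply_of_ne_of_ne hab.symm h]
  have hb'0 : Equiv.swap a c b ≠ i0 := by rcases hb'cases with h | h <;> rw [h] <;> assumption
  have hb'1 : Equiv.swap a c b ≠ i1 := by rcases hb'cases with h | h <;> rw [h] <;> assumption
  have hb'c : Equiv.swap a c b ≠ c := by
    rcases eq_or_ne b c with rfl | h
    · rw [Equiv.swap_apply_right]; intro h'; exact hab h'
    · rw [Equiv.swap_apply_of_ne_of_ne hab.symm h]; exact h
  refine ⟨Equiv.swap (Equiv.swap a c b) d * Equiv.swap a c, ?_, ?_, ?_, ?_⟩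
  · simp only [Equiv.Perm.mul_apply]
    rw [Equiv.swap_apply_of_ne_of_ne (Ne.symm ha0) (Ne.symm hc0),
      Equiv.swap_apply_of_ne_of_ne (Ne.symm hb'0) (Ne.symm hd0)]
  · simp only [Equiv.Perm.mul_apply]
    rw [Equiv.swap_apply_of_ne_of_ne (Ne.symm ha1) (Ne.symm hc1),
      Equiv.swap_apply_of_ne_of_ne (Ne.symm hb'1) (Ne.symm hd1)]
  · simp only [Equiv.Perm.mul_apply, Equiv.swap_apply_left]
    exact Equiv.swap_apply_of_ne_of_ne hb'c.symm hcd
  · simp only [Equiv.Perm.mul_apply, Equiv.swap_apply_left]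

lemma conj_mem {S : Finset (Equiv.Perm (Fin n))} (hS : IsConjClass n S)
    {s : Equiv.Perm (Fin n)} (hs : s ∈ S) (g : Equiv.Perm (Fin n)) : g * s * g⁻¹ ∈ S := by
  obtain ⟨σ, hσ⟩ := hS
  exact (hσ _).mpr (((hσ s).mp hs).trans (isConj_iff.mpr ⟨g, rfl⟩))

lemma card_conj_filter {S : Finset (Equiv.Perm (Fin n))} (hS : IsConjClass n S)
    (g : Equiv.Perm (Fin n)) (P Q : Equiv.Perm (Fin n) → Prop)
    [DecidablePred P] [DecidablePred Q]
    (h : ∀ s, P s ↔ Q (g * s * g⁻¹)) :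
    (S.filter P).card = (S.filter Q).card := by
  apply Finset.card_bij' (fun s _ => g * s * g⁻¹) (fun s _ => g⁻¹ * s * g)
  · intro s hs
    rw [Finset.mem_filter] at hs ⊢
    exact ⟨conj_mem hS hs.1 g, (h s).mp hs.2⟩
  · intro s hs
    rw [Finset.mem_filter] at hs ⊢
    have h1 : g⁻¹ * s * g ∈ S := by
      have := conj_mem hS hs.1 g⁻¹
      simpa using this
    refine ⟨h1, ?_⟩
    have h2 := h (g⁻¹ * s * g)
    have e : g * (g⁻¹ * s * g) * g⁻¹ = s := by group
    rw [e] at h2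
    exact h2.mpr hs.2
  · intro s _; group
  · intro s _; group

lemma noFix {S : Finset (Equiv.Perm (Fin n))} (hfix : ∀ σ ∈ S, fixCount n σ = 0)
    {s : Equiv.Perm (Fin n)} (hs : s ∈ S) (a : Fin n) : s a ≠ a := by
  intro h
  have h0 := hfix s hs
  rw [fixCount, Finset.card_eq_zero, Finset.filter_eq_empty_iff] at h0
  exact h0 (Finset.mem_univ a) h

lemma cnt1_const {S : Finset (Equiv.Perm (Fin n))} (hS : IsConjClass n S)
    {a b c d : Fin n} (hab : a ≠ b) (hcd : c ≠ d) :
    (S.filter fun s => s a = b).card = (S.filter fun s => s c = d).card := by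
  obtain ⟨g, hga, hgb⟩ := exists_map2 hab hcd
  refine card_conj_filter hS g _ _ (fun s => ?_)
  have hinv : g⁻¹ c = a := g.injective (by simp [hga])
  show s a = b ↔ (g * s * g⁻¹) c = d
  simp only [Equiv.Perm.mul_apply, hinv]
  constructor
  · intro h'; rw [h', hgb]
  · intro h'; rw [← hgb] at h'; exact g.injective h'

lemma cnt2_const {S : Finset (Equiv.Perm (Fin n))} (hS : IsConjClass n S)
    {a b c d : Fin n} (hab : a ≠ b) (hcd : c ≠ d) :
    (S.filter fun s => s a = b ∧ s b = a).card
      = (S.filter fun s => s c = d ∧ s d = c).card := by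
  obtain ⟨g, hga, hgb⟩ := exists_map2 hab hcd
  refine card_conj_filter hS g _ _ (fun s => ?_)
  have hinvc : g⁻¹ c = a := g.injective (by simp [hga])
  have hinvd : g⁻¹ d = b := g.injective (by simp [hgb])
  show (s a = b ∧ s b = a) ↔ ((g * s * g⁻¹) c = d ∧ (g * s * g⁻¹) d = c)
  simp only [Equiv.Perm.mul_apply, hinvc, hinvd]
  constructor
  · rintro ⟨h1, h2⟩; rw [h1, h2, hga, hgb]; exact ⟨rfl, rfl⟩
  · rintro ⟨h1, h2⟩
    rw [← hgb] at h1; rw [← hga] at h2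
    exact ⟨g.injective h1, g.injective h2⟩

lemma cntE_conj {S : Finset (Equiv.Perm (Fin n))} (hS : IsConjClass n S)
    {i0 i1 : Fin n} (g : Equiv.Perm (Fin n))
    (h0 : g i0 = i0) (h1 : g i1 = i1) (i j : Fin n) :
    (S.filter fun s => s i0 = i ∧ s i1 = j).card
      = (S.filter fun s => s i0 = g i ∧ s i1 = g j).card := by
  refine card_conj_filter hS g _ _ (fun s => ?_)
  have e0 : g⁻¹ i0 = i0 := g.injective (by simp [h0])
  have e1 : g⁻¹ i1 = i1 := g.injective (by simp [h1])
  show (s i0 = i ∧ s i1 = j) ↔ ((g * s * g⁻¹) i0 = g i ∧ (g * s * g⁻¹) i1 = g j)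
  simp only [Equiv.Perm.mul_apply, e0, e1]
  constructor
  · rintro ⟨ha, hb⟩; rw [ha, hb]; exact ⟨rfl, rfl⟩
  · rintro ⟨ha, hb⟩; exact ⟨g.injective ha, g.injective hb⟩

lemma double_count (S : Finset (Equiv.Perm (Fin n)))
    (C : Fin n × Fin n → Equiv.Perm (Fin n) → Prop) [∀ x s, Decidable (C x s)] :
    ∑ x ∈ univ.offDiag, (S.filter (C x)).card
      = ∑ s ∈ S, ((univ.offDiag : Finset (Fin n × Fin n)).filter (fun x => C x s)).card := by
  simp only [Finset.card_filter]
  exact Finset.sum_comm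

lemma per_s_B {s : Equiv.Perm (Fin n)} (hder : ∀ a, s a ≠ a) :
    ((univ.offDiag : Finset (Fin n × Fin n)).filter fun x => s x.1 = x.2).card = n := by
  have key : ((univ.offDiag : Finset (Fin n × Fin n)).filter fun x => s x.1 = x.2).card
      = (univ : Finset (Fin n)).card := by
    apply Finset.card_bij' (fun x _ => x.1) (fun a _ => (a, s a))
    · intro x _; exact mem_univ _
    · intro a _
      exact Finset.mem_filter.mpr
        ⟨Finset.mem_offDiag.mpr ⟨mem_univ _, mem_univ _, fun h => hder a h.symm⟩, rfl⟩
    · intro x hx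
      simp only [Finset.mem_filter] at hx
      exact Prod.ext rfl hx.2
    · intro a _; rfl
  rw [key]; simp

lemma per_s_m {s : Equiv.Perm (Fin n)} (hder : ∀ a, s a ≠ a) :
    ((univ.offDiag : Finset (Fin n × Fin n)).filter fun x => s x.1 = x.2 ∧ s x.2 = x.1).card
      = (univ.filter fun a => s (s a) = a).card := by
  apply Finset.card_bij' (fun x _ => x.1) (fun a _ => (a, s a))
  · intro x hx
    simp only [Finset.mem_filter, Finset.mem_offDiag] at hx
    simp only [Finset.mem_filter]
    refine ⟨mem_univ _, ?_⟩
    rw [hx.2.1]; exact hx.2.2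
  · intro a ha
    have ha2 := (Finset.mem_filter.mp ha).2
    exact Finset.mem_filter.mpr
      ⟨Finset.mem_offDiag.mpr ⟨mem_univ _, mem_univ _, fun h => hder a h.symm⟩, rfl, ha2⟩
  · intro x hx
    simp only [Finset.mem_filter] at hx
    exact Prod.ext rfl hx.2.1
  · intro a _; rfl

lemma perm_inv_apply_self (c : Equiv.Perm (Fin n)) (x : Fin n) : c⁻¹ (c x) = x :=
  Equiv.Perm.inv_eq_iff_eq.mpr rfl

lemma m_conj (c s : Equiv.Perm (Fin n)) :
    (univ.filter fun a => (c * s * c⁻¹) ((c * s * c⁻¹) a) = a).card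
      = (univ.filter fun a => s (s a) = a).card := by
  apply Finset.card_bij' (fun a _ => c⁻¹ a) (fun a _ => c a)
  · intro a ha
    simp only [Finset.mem_filter, Equiv.Perm.mul_apply, perm_inv_apply_self] at ha
    simp only [Finset.mem_filter]
    refine ⟨mem_univ _, ?_⟩
    have h2 := congrArg (⇑c⁻¹) ha.2
    simpa using h2
  · intro a ha
    simp only [Finset.mem_filter] at ha
    simp only [Finset.mem_filter, Equiv.Perm.mul_apply, perm_inv_apply_self]
    refine ⟨mem_univ _, ?_⟩
    rw [ha.2]
  · intro a _; simp
  · intro a _; simp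

lemma identB {S : Finset (Equiv.Perm (Fin n))} (hS : IsConjClass n S)
    (hfix : ∀ σ ∈ S, fixCount n σ = 0) {a b : Fin n} (hab : a ≠ b) :
    (S.filter fun s => s a = b).card * (n * n - n) = S.card * n := by
  have key := double_count S (fun x s => s x.1 = x.2)
  have h1 : ∀ x ∈ (univ.offDiag : Finset (Fin n × Fin n)),
      (S.filter fun s => s x.1 = x.2).card = (S.filter fun s => s a = b).card := by
    intro x hx
    rw [Finset.mem_offDiag] at hx
    exact cnt1_const hS hx.2.2 hab
  rw [Finset.sum_congr rfl h1, Finset.sum_const, smul_eq_mul] at key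
  have h2 : ∀ s ∈ S,
      ((univ.offDiag : Finset (Fin n × Fin n)).filter fun x => s x.1 = x.2).card = n :=
    fun s hs => per_s_B (noFix hfix hs)
  rw [Finset.sum_congr rfl h2, Finset.sum_const, smul_eq_mul] at key
  have hcard : (univ.offDiag : Finset (Fin n × Fin n)).card = n * n - n := by
    rw [Finset.offDiag_card]; simp
  rw [hcard] at key
  rw [mul_comm]; exact key

lemma identP {S : Finset (Equiv.Perm (Fin n))} (hS : IsConjClass n S)
    (hfix : ∀ σ ∈ S, fixCount n σ = 0) {a b : Fin n} (hab : a ≠ b)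
    {s₀ : Equiv.Perm (Fin n)} (hs₀ : s₀ ∈ S) :
    (S.filter fun s => s a = b ∧ s b = a).card * (n * n - n)
      = S.card * (univ.filter fun x => s₀ (s₀ x) = x).card := by
  have key := double_count S (fun x s => s x.1 = x.2 ∧ s x.2 = x.1)
  have h1 : ∀ x ∈ (univ.offDiag : Finset (Fin n × Fin n)),
      (S.filter fun s => s x.1 = x.2 ∧ s x.2 = x.1).card
        = (S.filter fun s => s a = b ∧ s b = a).card := by
    intro x hx
    rw [Finset.mem_offDiag] at hx
    exact cnt2_const hS hx.2.2 hab
  rw [Finset.sum_congr rfl h1, Finset.sum_const, smul_eq_mul] at key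
  have h2 : ∀ s ∈ S,
      ((univ.offDiag : Finset (Fin n × Fin n)).filter fun x => s x.1 = x.2 ∧ s x.2 = x.1).card
        = (univ.filter fun x => s₀ (s₀ x) = x).card := by
    intro s hs
    rw [per_s_m (noFix hfix hs)]
    obtain ⟨σ, hσ⟩ := hS
    have hconj : IsConj s₀ s := ((hσ s₀).mp hs₀).symm.trans ((hσ s).mp hs)
    obtain ⟨c, hc⟩ := isConj_iff.mp hconj
    rw [← hc]
    exact m_conj c s₀
  rw [Finset.sum_congr rfl h2, Finset.sum_const, smul_eq_mul] at key
  have hcard : (univ.offDiag : Finset (Fin n × Fin n)).card = n * n - n := by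
    rw [Finset.offDiag_card]; simp
  rw [hcard] at key
  rw [mul_comm]; exact key

lemma master {S : Finset (Equiv.Perm (Fin n))} (hS : IsConjClass n S)
    (hfix : ∀ σ ∈ S, fixCount n σ = 0)
    {i0 i1 i2 i3 : Fin n}
    (h01 : i0 ≠ i1) (h02 : i0 ≠ i2) (h03 : i0 ≠ i3)
    (h12 : i1 ≠ i2) (h13 : i1 ≠ i3) (h23 : i2 ≠ i3)
    (F : Fin n → Fin n → ℝ) :
    ∑ s ∈ S, F (s i0) (s i1)
      = ((S.filter fun s => s i0 = i1 ∧ s i1 = i0).card : ℝ) * F i1 i0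
        + ((S.filter fun s => s i0 = i1 ∧ s i1 = i2).card : ℝ)
            * (∑ j ∈ (univ.erase i0).erase i1, F i1 j)
        + ((S.filter fun s => s i0 = i2 ∧ s i1 = i0).card : ℝ)
            * (∑ i ∈ (univ.erase i0).erase i1, F i i0)
        + ((S.filter fun s => s i0 = i2 ∧ s i1 = i3).card : ℝ)
            * ((∑ i ∈ (univ.erase i0).erase i1, ∑ j ∈ (univ.erase i0).erase i1, F i j)
                - ∑ i ∈ (univ.erase i0).erase i1, F i i) := by
  classical
  set J := (univ.erase i0).erase i1 with hJ
  set E : Fin n → Fin n → ℕ := fun i j => (S.filter fun s => s i0 = i ∧ s i1 = j).card with hE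
  have hmemJ : ∀ {x : Fin n}, x ∈ J → x ≠ i1 ∧ x ≠ i0 := by
    intro x hx
    rw [hJ, Finset.mem_erase, Finset.mem_erase] at hx
    exact ⟨hx.1, hx.2.1⟩
  have hE0 : ∀ j, E i0 j = 0 := by
    intro j
    rw [hE]
    simp only
    rw [Finset.card_eq_zero, Finset.filter_eq_empty_iff]
    intro s hs hc
    exact noFix hfix hs i0 hc.1
  have hE1 : ∀ i, E i i1 = 0 := by
    intro i
    rw [hE]
    simp only
    rw [Finset.card_eq_zero, Finset.filter_eq_empty_iff]
    intro s hs hc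
    exact noFix hfix hs i1 hc.2
  have hEd : ∀ i, E i i = 0 := by
    intro i
    rw [hE]
    simp only
    rw [Finset.card_eq_zero, Finset.filter_eq_empty_iff]
    intro s _ hc
    exact h01 (s.injective (hc.1.trans hc.2.symm))
  have hqc : ∀ j ∈ J, E i1 j = E i1 i2 := by
    intro j hj
    obtain ⟨hj1, hj0⟩ := hmemJ hj
    rcases eq_or_ne j i2 with rfl | hj2
    · rfl
    have hg0 : Equiv.swap i2 j i0 = i0 :=
      Equiv.swap_apply_of_ne_of_ne h02 (Ne.symm hj0)
    have hg1 : Equiv.swap i2 j i1 = i1 :=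
      Equiv.swap_apply_of_ne_of_ne h12 (Ne.symm hj1)
    have hh := cntE_conj hS (Equiv.swap i2 j) hg0 hg1 i1 i2
    rw [hg1, Equiv.swap_apply_left] at hh
    exact hh.symm
  have hrc : ∀ i ∈ J, E i i0 = E i2 i0 := by
    intro i hi
    obtain ⟨hi1, hi0⟩ := hmemJ hi
    rcases eq_or_ne i i2 with rfl | hi2
    · rfl
    have hg0 : Equiv.swap i2 i i0 = i0 :=
      Equiv.swap_apply_of_ne_of_ne h02 (Ne.symm hi0)
    have hg1 : Equiv.swap i2 i i1 = i1 :=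
      Equiv.swap_apply_of_ne_of_ne h12 (Ne.symm hi1)
    have hh := cntE_conj hS (Equiv.swap i2 i) hg0 hg1 i2 i0
    rw [hg0, Equiv.swap_apply_left] at hh
    exact hh.symm
  have htc : ∀ i ∈ J, ∀ j ∈ J, i ≠ j → E i j = E i2 i3 := by
    intro i hi j hj hij
    obtain ⟨hi1, hi0⟩ := hmemJ hi
    obtain ⟨hj1, hj0⟩ := hmemJ hj
    obtain ⟨g, hg0, hg1, hg2, hg3⟩ :=
      exists_fix2 h23 hij h02.symm h12.symm h03.symm h13.symm hi0 hi1 hj0 hj1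
    have hh := cntE_conj hS g hg0 hg1 i2 i3
    rw [hg2, hg3] at hh
    exact hh.symm
  have fib : ∑ s ∈ S, F (s i0) (s i1)
      = ∑ y : Fin n × Fin n, ∑ s ∈ S.filter fun s => (s i0, s i1) = y, F (s i0) (s i1) :=
    (Finset.sum_fiberwise_of_maps_to (fun x _ => mem_univ _) _).symm
  have inner : ∀ y : Fin n × Fin n,
      ∑ s ∈ S.filter (fun s => (s i0, s i1) = y), F (s i0) (s i1)
        = (E y.1 y.2 : ℝ) * F y.1 y.2 := by
    intro y
    have hcg : ∀ s ∈ S.filter (fun s => (s i0, s i1) = y), F (s i0) (s i1) = F y.1 y.2 := by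
      intro s hs
      rw [Finset.mem_filter] at hs
      rw [← hs.2]
    rw [Finset.sum_congr rfl hcg, Finset.sum_const, nsmul_eq_mul]
    congr 2
    rw [hE]
    simp only
    congr 1
    apply Finset.filter_congr
    intro s _
    simp [Prod.ext_iff]
  rw [fib, Finset.sum_congr rfl (fun y _ => inner y), Fintype.sum_prod_type]
  have split : ∀ f : Fin n → ℝ, ∑ x, f x = f i0 + (f i1 + ∑ x ∈ J, f x) := by
    intro f
    rw [← Finset.add_sum_erase _ f (mem_univ i0),
      ← Finset.add_sum_erase _ f (Finset.mem_erase.mpr ⟨h01.symm, mem_univ i1⟩)]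
  rw [split (fun i => ∑ j, (E i j : ℝ) * F i j)]
  have row0 : ∑ j, (E i0 j : ℝ) * F i0 j = 0 := by
    apply Finset.sum_eq_zero
    intro j _
    rw [hE0 j]
    simp
  have row1 : ∑ j, (E i1 j : ℝ) * F i1 j
      = (E i1 i0 : ℝ) * F i1 i0 + (E i1 i2 : ℝ) * ∑ j ∈ J, F i1 j := by
    rw [split (fun j => (E i1 j : ℝ) * F i1 j)]
    rw [hE1 i1]
    have hcg : ∀ j ∈ J, (E i1 j : ℝ) * F i1 j = (E i1 i2 : ℝ) * F i1 j := by
      intro j hj; rw [hqc j hj]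
    rw [Finset.sum_congr rfl hcg, ← Finset.mul_sum]
    push_cast
    ring
  have rowJ : ∀ i ∈ J, ∑ j, (E i j : ℝ) * F i j
      = (E i2 i0 : ℝ) * F i i0
        + (E i2 i3 : ℝ) * ((∑ j ∈ J, F i j) - F i i) := by
    intro i hi
    rw [split (fun j => (E i j : ℝ) * F i j)]
    rw [hE1 i, hrc i hi]
    have hsum : ∑ j ∈ J, (E i j : ℝ) * F i j
        = (E i2 i3 : ℝ) * ((∑ j ∈ J, F i j) - F i i) := by
      rw [← Finset.add_sum_erase _ _ hi, hEd i]
      have hcg : ∀ j ∈ J.erase i, (E i j : ℝ) * F i j = (E i2 i3 : ℝ) * F i j := by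
        intro j hj
        rw [Finset.mem_erase] at hj
        rw [htc i hi j hj.2 (Ne.symm hj.1)]
      rw [Finset.sum_congr rfl hcg, ← Finset.mul_sum,
        Finset.sum_erase_eq_sub hi]
      push_cast
      ring
    rw [hsum]
    push_cast
    ring
  rw [row0, row1, Finset.sum_congr rfl rowJ]
  rw [Finset.sum_add_distrib, ← Finset.mul_sum, ← Finset.mul_sum, Finset.sum_sub_distrib]
  ring

lemma mulVec_eq (S : Finset (Equiv.Perm (Fin n))) (u : Equiv.Perm (Fin n) → ℝ)
    (g : Equiv.Perm (Fin n)) :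
    (adjMat n S).mulVec u g = ∑ s ∈ S, u (g * s) := by
  classical
  simp only [Matrix.mulVec, dotProduct, adjMat, Matrix.of_apply]
  rw [← Equiv.sum_comp (Equiv.mulLeft g)
    (fun h => (if g⁻¹ * h ∈ S then (1:ℝ) else 0) * u h)]
  simp only [Equiv.coe_mulLeft, inv_mul_cancel_left]
  simp only [ite_mul, one_mul, zero_mul]
  rw [Finset.sum_ite_mem, Finset.univ_inter]

lemma eigen_eq {S : Finset (Equiv.Perm (Fin n))} (hS : IsConjClass n S)
    (hfix : ∀ σ ∈ S, fixCount n σ = 0)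
    {i0 i1 i2 i3 : Fin n}
    (h01 : i0 ≠ i1) (h02 : i0 ≠ i2) (h03 : i0 ≠ i3)
    (h12 : i1 ≠ i2) (h13 : i1 ≠ i3) (h23 : i2 ≠ i3)
    (w : Fin n → Fin n → ℝ)
    (hdiag : ∀ i, w i i = 0)
    (hrow : ∀ i, ∑ j, w i j = 0)
    (hcol : ∀ j, ∑ i, w i j = 0) (g : Equiv.Perm (Fin n)) :
    ∑ s ∈ S, w ((g * s) i0) ((g * s) i1)
      = ((S.filter fun s => s i0 = i1 ∧ s i1 = i0).card : ℝ) * w (g i1) (g i0)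
        - ((S.filter fun s => s i0 = i1 ∧ s i1 = i2).card : ℝ) * w (g i1) (g i0)
        - ((S.filter fun s => s i0 = i2 ∧ s i1 = i0).card : ℝ) * w (g i1) (g i0)
        + ((S.filter fun s => s i0 = i2 ∧ s i1 = i3).card : ℝ)
            * (w (g i0) (g i1) + w (g i1) (g i0)) := by
  have hM := master hS hfix h01 h02 h03 h12 h13 h23 (fun i j => w (g i) (g j))
  simp only [Equiv.Perm.mul_apply]
  rw [hM]
  have splitJ : ∀ f : Fin n → ℝ,
      ∑ x ∈ (univ.erase i0).erase i1, f x = (∑ x, f x) - f i0 - f i1 := by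
    intro f
    rw [Finset.sum_erase_eq_sub (Finset.mem_erase.mpr ⟨h01.symm, mem_univ i1⟩),
      Finset.sum_erase_eq_sub (mem_univ i0)]
  have hrow' : ∀ x, ∑ j, w x (g j) = 0 := by
    intro x
    rw [Equiv.sum_comp g (w x)]
    exact hrow x
  have hcol' : ∀ y, ∑ i, w (g i) y = 0 := by
    intro y
    rw [Equiv.sum_comp g (fun x => w x y)]
    exact hcol y
  have e1 : ∑ j ∈ (univ.erase i0).erase i1, w (g i1) (g j) = - w (g i1) (g i0) := by
    rw [splitJ, hrow', hdiag]
    ring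
  have e2 : ∑ i ∈ (univ.erase i0).erase i1, w (g i) (g i0) = - w (g i1) (g i0) := by
    rw [splitJ, hcol', hdiag]
    ring
  have e4 : ∑ i ∈ (univ.erase i0).erase i1, w (g i) (g i1) = - w (g i0) (g i1) := by
    rw [splitJ, hcol', hdiag]
    ring
  have e3 : ∑ i ∈ (univ.erase i0).erase i1, ∑ j ∈ (univ.erase i0).erase i1, w (g i) (g j)
      = w (g i0) (g i1) + w (g i1) (g i0) := by
    have inner : ∀ i, ∑ j ∈ (univ.erase i0).erase i1, w (g i) (g j)
        = - (w (g i) (g i0) + w (g i) (g i1)) := by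
      intro i
      rw [splitJ, hrow']
      ring
    rw [Finset.sum_congr rfl (fun i _ => inner i)]
    rw [Finset.sum_neg_distrib, Finset.sum_add_distrib, e2, e4]
    ring
  have e5 : ∑ i ∈ (univ.erase i0).erase i1, w (g i) (g i) = 0 :=
    Finset.sum_eq_zero (fun i _ => hdiag (g i))
  rw [e1, e2, e3, e5]
  ring

lemma eigen_vec {S : Finset (Equiv.Perm (Fin n))} (hS : IsConjClass n S)
    (hfix : ∀ σ ∈ S, fixCount n σ = 0)
    {i0 i1 i2 i3 : Fin n}
    (h01 : i0 ≠ i1) (h02 : i0 ≠ i2) (h03 : i0 ≠ i3)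
    (h12 : i1 ≠ i2) (h13 : i1 ≠ i3) (h23 : i2 ≠ i3)
    (w : Fin n → Fin n → ℝ)
    (hdiag : ∀ i, w i i = 0)
    (hrow : ∀ i, ∑ j, w i j = 0)
    (hcol : ∀ j, ∑ i, w i j = 0) :
    (adjMat n S).mulVec (fun g => w (g i0) (g i1))
      = fun g =>
        ((S.filter fun s => s i0 = i1 ∧ s i1 = i0).card : ℝ) * w (g i1) (g i0)
        - ((S.filter fun s => s i0 = i1 ∧ s i1 = i2).card : ℝ) * w (g i1) (g i0)
        - ((S.filter fun s => s i0 = i2 ∧ s i1 = i0).card : ℝ) * w (g i1) (g i0)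
        + ((S.filter fun s => s i0 = i2 ∧ s i1 = i3).card : ℝ)
            * (w (g i0) (g i1) + w (g i1) (g i0)) := by
  funext g
  rw [mulVec_eq]
  exact eigen_eq hS hfix h01 h02 h03 h12 h13 h23 w hdiag hrow hcol g

section W
variable {i0 i1 i2 i3 : Fin n}

noncomputable def wA (i0 i1 i2 : Fin n) : Fin n → Fin n → ℝ := fun i j =>
  (if i = i0 then (1:ℝ) else 0) * (if j = i1 then (1:ℝ) else 0)
  + (if i = i1 then (1:ℝ) else 0) * (if j = i2 then (1:ℝ) else 0)
  + (if i = i2 then (1:ℝ) else 0) * (if j = i0 then (1:ℝ) else 0)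
  - (if i = i1 then (1:ℝ) else 0) * (if j = i0 then (1:ℝ) else 0)
  - (if i = i2 then (1:ℝ) else 0) * (if j = i1 then (1:ℝ) else 0)
  - (if i = i0 then (1:ℝ) else 0) * (if j = i2 then (1:ℝ) else 0)

noncomputable def wS (i0 i1 i2 i3 : Fin n) : Fin n → Fin n → ℝ := fun i j =>
  (if i = i0 then (1:ℝ) else 0) * (if j = i1 then (1:ℝ) else 0)
  + (if i = i1 then (1:ℝ) else 0) * (if j = i0 then (1:ℝ) else 0)
  + (if i = i2 then (1:ℝ) else 0) * (if j = i3 then (1:ℝ) else 0)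
  + (if i = i3 then (1:ℝ) else 0) * (if j = i2 then (1:ℝ) else 0)
  - (if i = i0 then (1:ℝ) else 0) * (if j = i2 then (1:ℝ) else 0)
  - (if i = i2 then (1:ℝ) else 0) * (if j = i0 then (1:ℝ) else 0)
  - (if i = i1 then (1:ℝ) else 0) * (if j = i3 then (1:ℝ) else 0)
  - (if i = i3 then (1:ℝ) else 0) * (if j = i1 then (1:ℝ) else 0)

lemma hzz {a b : Fin n} (hab : a ≠ b) (i : Fin n) :
    (if i = a then (1:ℝ) else 0) * (if i = b then (1:ℝ) else 0) = 0 := by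
  rcases eq_or_ne i a with rfl | h
  · rw [if_neg (fun h' : i = b => hab h'), mul_zero]
  · rw [if_neg h, zero_mul]

lemma hone (b : Fin n) : ∑ j, (if j = b then (1:ℝ) else 0) = 1 := by
  rw [Finset.sum_ite_eq' univ b (fun _ => (1:ℝ)), if_pos (mem_univ b)]

lemma wA_diag (h01 : i0 ≠ i1) (h02 : i0 ≠ i2) (h12 : i1 ≠ i2) (i : Fin n) :
    wA i0 i1 i2 i i = 0 := by
  unfold wA
  rw [hzz h01, hzz h12, hzz h02.symm, hzz h01.symm, hzz h12.symm, hzz h02]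
  ring

lemma wA_row (i : Fin n) : ∑ j, wA i0 i1 i2 i j = 0 := by
  unfold wA
  simp only [Finset.sum_add_distrib, Finset.sum_sub_distrib, ← Finset.mul_sum, hone]
  ring

lemma wA_col (j : Fin n) : ∑ i, wA i0 i1 i2 i j = 0 := by
  unfold wA
  simp only [Finset.sum_add_distrib, Finset.sum_sub_distrib, ← Finset.sum_mul, hone]
  ring

lemma wA_anti (x y : Fin n) : wA i0 i1 i2 y x = - wA i0 i1 i2 x y := by
  unfold wA; ring

lemma wA_val (h01 : i0 ≠ i1) (h02 : i0 ≠ i2) (h12 : i1 ≠ i2) :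
    wA i0 i1 i2 i0 i1 = 1 := by
  unfold wA
  simp [h01, h02, h12]

lemma wS_diag (h01 : i0 ≠ i1) (h02 : i0 ≠ i2) (h03 : i0 ≠ i3)
    (h12 : i1 ≠ i2) (h13 : i1 ≠ i3) (h23 : i2 ≠ i3) (i : Fin n) :
    wS i0 i1 i2 i3 i i = 0 := by
  unfold wS
  rw [hzz h01, hzz h01.symm, hzz h23, hzz h23.symm, hzz h02, hzz h02.symm,
    hzz h13, hzz h13.symm]
  ring

lemma wS_row (i : Fin n) : ∑ j, wS i0 i1 i2 i3 i j = 0 := by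
  unfold wS
  simp only [Finset.sum_add_distrib, Finset.sum_sub_distrib, ← Finset.mul_sum, hone]
  ring

lemma wS_col (j : Fin n) : ∑ i, wS i0 i1 i2 i3 i j = 0 := by
  unfold wS
  simp only [Finset.sum_add_distrib, Finset.sum_sub_distrib, ← Finset.sum_mul, hone]
  ring

lemma wS_symm (x y : Fin n) : wS i0 i1 i2 i3 y x = wS i0 i1 i2 i3 x y := by
  unfold wS; ring

lemma wS_val (h01 : i0 ≠ i1) (h02 : i0 ≠ i2) (h03 : i0 ≠ i3)
    (h12 : i1 ≠ i2) (h13 : i1 ≠ i3) (h23 : i2 ≠ i3) :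
    wS i0 i1 i2 i3 i0 i1 = 1 := by
  unfold wS
  simp [h01, h02, h03, h12, h13, h23]

end W

lemma arith_m0 {nR N B B' p q r : ℝ} (hn : 6 ≤ nR) (hN : 0 < N)
    (hB : B * (nR * nR - nR) = N * nR) (hB' : B' * (nR * nR - nR) = N * nR)
    (hp : p * (nR * nR - nR) = 0)
    (hM2 : B = p + q * (nR - 2)) (hM3 : B' = p + r * (nR - 2))
    (hq0 : 0 ≤ q) (hr0 : 0 ≤ r) :
    0 < q + r - p ∧ q + r - p < N := by
  have hD : 0 < nR * nR - nR := by nlinarith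
  have hpz : p = 0 := by
    rcases mul_eq_zero.mp hp with h | h
    · exact h
    · exact absurd h (ne_of_gt hD)
  subst hpz
  have h1 : q * ((nR - 2) * (nR * nR - nR)) = N * nR := by
    rw [← hB, hM2]; ring
  have h2 : r * ((nR - 2) * (nR * nR - nR)) = N * nR := by
    rw [← hB', hM3]; ring
  have hK : 0 < (nR - 2) * (nR * nR - nR) := by nlinarith
  have hq : 0 < q := by
    have := div_pos (mul_pos hN (by linarith : (0:ℝ) < nR)) hK
    rwa [← h1, mul_div_cancel_right₀ _ (ne_of_gt hK)] at this
  constructor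
  · linarith
  · have h3 : (q + r) * ((nR - 2) * (nR * nR - nR)) = 2 * N * nR := by
      rw [add_mul, h1, h2]; ring
    have h4 : 2 * N * nR < N * ((nR - 2) * (nR * nR - nR)) := by
      nlinarith [mul_pos hN (by nlinarith : (0:ℝ) < nR * ((nR - 2) * (nR - 1) - 2))]
    have h5 : (q + r) * ((nR - 2) * (nR * nR - nR))
        < N * ((nR - 2) * (nR * nR - nR)) := by rw [h3]; exact h4
    have := lt_of_mul_lt_mul_right h5 (le_of_lt hK)
    linarith

lemma arith_m1 {nR N m B B' p q r t : ℝ} (hn : 6 ≤ nR) (hN : 0 < N)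
    (hm1 : 1 ≤ m) (hmn : m ≤ nR)
    (hB : B * (nR * nR - nR) = N * nR) (hB' : B' * (nR * nR - nR) = N * nR)
    (hp : p * (nR * nR - nR) = N * m)
    (hM1 : N = p + q * (nR - 2) + r * (nR - 2) + t * ((nR - 2) * (nR - 2) - (nR - 2)))
    (hM2 : B = p + q * (nR - 2)) (hM3 : B' = p + r * (nR - 2)) :
    0 < p - q - r + 2 * t ∧ p - q - r + 2 * t < N := by
  have key : (p - q - r + 2 * t) * (nR * (nR - 1) * (nR - 2) * (nR - 3))
      = N * m * ((nR - 1) * (nR - 2)) := by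
    linear_combination ((nR - 1) * (nR - 2)) * hp + (nR * (nR - 1) * (nR - 1)) * hM2
      + (nR * (nR - 1) * (nR - 1)) * hM3 + (- 2 * nR * (nR - 1)) * hM1
      - (nR - 1) * hB - (nR - 1) * hB'
  have hK : 0 < nR * (nR - 1) * (nR - 2) * (nR - 3) := by nlinarith
  constructor
  · have hP : 0 < N * m * ((nR - 1) * (nR - 2)) := by
      apply mul_pos (mul_pos hN (by linarith)) (by nlinarith)
    have := div_pos hP hK
    rwa [← key, mul_div_cancel_right₀ _ (ne_of_gt hK)] at this
  · have hx : (0:ℝ) < nR * (nR - 3) - m := by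
      nlinarith [hmn, hn, (by linarith : (0:ℝ) < nR)]
    have hy : (0:ℝ) < (nR - 1) * (nR - 2) := by nlinarith
    have h4 : N * m * ((nR - 1) * (nR - 2)) < N * (nR * (nR - 1) * (nR - 2) * (nR - 3)) := by
      nlinarith [mul_pos hN (mul_pos hy hx)]
    have h5 : (p - q - r + 2 * t) * (nR * (nR - 1) * (nR - 2) * (nR - 3))
        < N * (nR * (nR - 1) * (nR - 2) * (nR - 3)) := by rw [key]; exact h4
    exact lt_of_mul_lt_mul_right h5 (le_of_lt hK)

end Stmt18Aux

open Stmt18Aux in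
/-- For every `n ≥ 6` and every conjugacy class `S` of `S_n` consisting of derangements,
`Cay(S_n, S)` has an eigenvalue `λ` with `0 < λ < |S|`. -/
theorem stmt18 (n : ℕ) (hn : 6 ≤ n) (S : Finset (Equiv.Perm (Fin n)))
    (hS : IsConjClass n S) (hfix : ∀ σ ∈ S, fixCount n σ = 0) :
    ∃ lam : ℝ, IsEig n S lam ∧ 0 < lam ∧ lam < (S.card : ℝ) := by
  classical
  obtain ⟨σ₀, hσ₀⟩ := id hS
  have hσS : σ₀ ∈ S := (hσ₀ σ₀).mpr (IsConj.refl σ₀)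
  have hNpos : 0 < S.card := Finset.card_pos.mpr ⟨σ₀, hσS⟩
  let i0 : Fin n := ⟨0, by omega⟩
  let i1 : Fin n := ⟨1, by omega⟩
  let i2 : Fin n := ⟨2, by omega⟩
  let i3 : Fin n := ⟨3, by omega⟩
  have h01 : i0 ≠ i1 := Fin.ne_of_val_ne (show (0:ℕ) ≠ 1 by norm_num)
  have h02 : i0 ≠ i2 := Fin.ne_of_val_ne (show (0:ℕ) ≠ 2 by norm_num)
  have h03 : i0 ≠ i3 := Fin.ne_of_val_ne (show (0:ℕ) ≠ 3 by norm_num)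
  have h12 : i1 ≠ i2 := Fin.ne_of_val_ne (show (1:ℕ) ≠ 2 by norm_num)
  have h13 : i1 ≠ i3 := Fin.ne_of_val_ne (show (1:ℕ) ≠ 3 by norm_num)
  have h23 : i2 ≠ i3 := Fin.ne_of_val_ne (show (2:ℕ) ≠ 3 by norm_num)
  -- cast identities
  have hnn : n ≤ n * n := Nat.le_mul_of_pos_left n (by omega)
  have cB : ((S.filter fun s => s i0 = i1).card : ℝ) * ((n:ℝ) * n - n)
      = (S.card : ℝ) * n := by
    have h := identB hS hfix h01
    have h2 := congrArg (Nat.cast (R := ℝ)) h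
    push_cast [Nat.cast_sub hnn] at h2
    exact h2
  have cB' : ((S.filter fun s => s i1 = i0).card : ℝ) * ((n:ℝ) * n - n)
      = (S.card : ℝ) * n := by
    have h := identB hS hfix h01.symm
    have h2 := congrArg (Nat.cast (R := ℝ)) h
    push_cast [Nat.cast_sub hnn] at h2
    exact h2
  have cP : ((S.filter fun s => s i0 = i1 ∧ s i1 = i0).card : ℝ) * ((n:ℝ) * n - n)
      = (S.card : ℝ) * ((univ.filter fun x => σ₀ (σ₀ x) = x).card : ℝ) := by
    have h := identP hS hfix h01 hσS
    have h2 := congrArg (Nat.cast (R := ℝ)) h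
    push_cast [Nat.cast_sub hnn] at h2
    exact h2
  -- master instances
  have hJcard : ((univ.erase i0).erase i1).card = n - 2 := by
    rw [Finset.card_erase_of_mem (Finset.mem_erase.mpr ⟨h01.symm, mem_univ i1⟩),
      Finset.card_erase_of_mem (mem_univ i0), Finset.card_univ, Fintype.card_fin]
    omega
  have hJcR : (((univ.erase i0).erase i1).card : ℝ) = (n : ℝ) - 2 := by
    rw [hJcard, Nat.cast_sub (by omega : 2 ≤ n)]
    norm_num
  have hi1J : i1 ∉ (univ.erase i0).erase i1 := Finset.notMem_erase i1 _
  have hi0J : i0 ∉ (univ.erase i0).erase i1 := fun h =>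
    (Finset.notMem_erase i0 univ) (Finset.mem_of_mem_erase h)
  have hf1 : ((univ.erase i0).erase i1).filter (fun x => x = i1) = ∅ := by
    rw [Finset.filter_eq', if_neg hi1J]
  have hf0 : ((univ.erase i0).erase i1).filter (fun x => x = i0) = ∅ := by
    rw [Finset.filter_eq', if_neg hi0J]
  have M1 : (S.card : ℝ)
      = ((S.filter fun s => s i0 = i1 ∧ s i1 = i0).card : ℝ)
        + ((S.filter fun s => s i0 = i1 ∧ s i1 = i2).card : ℝ) * ((n:ℝ) - 2)
        + ((S.filter fun s => s i0 = i2 ∧ s i1 = i0).card : ℝ) * ((n:ℝ) - 2)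
        + ((S.filter fun s => s i0 = i2 ∧ s i1 = i3).card : ℝ)
            * (((n:ℝ) - 2) * ((n:ℝ) - 2) - ((n:ℝ) - 2)) := by
    have h := master hS hfix h01 h02 h03 h12 h13 h23 (fun _ _ => (1:ℝ))
    simp only [Finset.sum_const, nsmul_eq_mul, mul_one, hJcR] at h
    linear_combination h
  have M2 : ((S.filter fun s => s i0 = i1).card : ℝ)
      = ((S.filter fun s => s i0 = i1 ∧ s i1 = i0).card : ℝ)
        + ((S.filter fun s => s i0 = i1 ∧ s i1 = i2).card : ℝ) * ((n:ℝ) - 2) := by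
    have hBsum : (∑ i ∈ (univ.erase i0).erase i1, (if i = i1 then (1:ℝ) else 0)) = 0 := by
      rw [Finset.sum_ite_eq' ((univ.erase i0).erase i1) i1 (fun _ => (1:ℝ)), if_neg hi1J]
    have h := master hS hfix h01 h02 h03 h12 h13 h23 (fun i _ => if i = i1 then (1:ℝ) else 0)
    simp only [eq_self_iff_true, if_true, Finset.sum_const, nsmul_eq_mul, mul_one,
      Finset.sum_boole, hJcR] at h
    rw [← Finset.mul_sum] at h
    simp only [hBsum, hf1, Finset.card_empty, Nat.cast_zero, mul_zero, sub_zero,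
      zero_sub, mul_neg, mul_one, add_zero, neg_zero] at h
    linear_combination h
  have M3 : ((S.filter fun s => s i1 = i0).card : ℝ)
      = ((S.filter fun s => s i0 = i1 ∧ s i1 = i0).card : ℝ)
        + ((S.filter fun s => s i0 = i2 ∧ s i1 = i0).card : ℝ) * ((n:ℝ) - 2) := by
    have hB0sum : (∑ i ∈ (univ.erase i0).erase i1, (if i = i0 then (1:ℝ) else 0)) = 0 := by
      rw [Finset.sum_ite_eq' ((univ.erase i0).erase i1) i0 (fun _ => (1:ℝ)), if_neg hi0J]
    have h := master hS hfix h01 h02 h03 h12 h13 h23 (fun _ j => if j = i0 then (1:ℝ) else 0)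
    simp only [eq_self_iff_true, if_true, Finset.sum_const, nsmul_eq_mul, mul_one,
      Finset.sum_boole, hJcR, hB0sum, hf0, Finset.card_empty, Nat.cast_zero,
      mul_zero, Finset.sum_const_zero, sub_zero, add_zero, zero_sub, mul_neg] at h
    linear_combination h
  -- facts about m
  have hmlen : (univ.filter fun x => σ₀ (σ₀ x) = x).card ≤ n := by
    calc (univ.filter fun x => σ₀ (σ₀ x) = x).card ≤ (univ : Finset (Fin n)).card :=
          Finset.card_filter_le _ _
      _ = n := by simp
  have hnR6 : (6:ℝ) ≤ (n:ℝ) := by exact_mod_cast hn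
  have hNR : (0:ℝ) < (S.card : ℝ) := by exact_mod_cast hNpos
  rcases Nat.eq_zero_or_pos (univ.filter fun x => σ₀ (σ₀ x) = x).card with hm0 | hm1
  · -- no 2-cycles: antisymmetric eigenvector
    have cP0 : ((S.filter fun s => s i0 = i1 ∧ s i1 = i0).card : ℝ) * ((n:ℝ) * n - n) = 0 := by
      rw [cP, hm0]
      norm_num
    have harith := arith_m0 hnR6 hNR cB cB' cP0 M2 M3
      (Nat.cast_nonneg _) (Nat.cast_nonneg _)
    refine ⟨((S.filter fun s => s i0 = i1 ∧ s i1 = i2).card : ℝ)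
        + ((S.filter fun s => s i0 = i2 ∧ s i1 = i0).card : ℝ)
        - ((S.filter fun s => s i0 = i1 ∧ s i1 = i0).card : ℝ),
      ⟨fun g => wA i0 i1 i2 (g i0) (g i1), ?_, ?_⟩, harith.1, harith.2⟩
    · intro hzero
      have h1 := congrFun hzero 1
      simp only [Equiv.Perm.one_apply, Pi.zero_apply] at h1
      rw [wA_val h01 h02 h12] at h1
      exact one_ne_zero h1
    · rw [eigen_vec hS hfix h01 h02 h03 h12 h13 h23 (wA i0 i1 i2)
        (wA_diag h01 h02 h12) wA_row wA_col]
      funext g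
      simp only [Pi.smul_apply, smul_eq_mul]
      rw [wA_anti (g i0) (g i1)]
      ring
  · -- has 2-cycles: symmetric eigenvector
    have hm1R : (1:ℝ) ≤ ((univ.filter fun x => σ₀ (σ₀ x) = x).card : ℝ) := by
      exact_mod_cast hm1
    have hmnR : ((univ.filter fun x => σ₀ (σ₀ x) = x).card : ℝ) ≤ (n:ℝ) := by
      exact_mod_cast hmlen
    have harith := arith_m1 hnR6 hNR hm1R hmnR cB cB' cP M1 M2 M3
    refine ⟨((S.filter fun s => s i0 = i1 ∧ s i1 = i0).card : ℝ)
        - ((S.filter fun s => s i0 = i1 ∧ s i1 = i2).card : ℝ)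
        - ((S.filter fun s => s i0 = i2 ∧ s i1 = i0).card : ℝ)
        + 2 * ((S.filter fun s => s i0 = i2 ∧ s i1 = i3).card : ℝ),
      ⟨fun g => wS i0 i1 i2 i3 (g i0) (g i1), ?_, ?_⟩, harith.1, harith.2⟩
    · intro hzero
      have h1 := congrFun hzero 1
      simp only [Equiv.Perm.one_apply, Pi.zero_apply] at h1
      rw [wS_val h01 h02 h03 h12 h13 h23] at h1
      exact one_ne_zero h1
    · rw [eigen_vec hS hfix h01 h02 h03 h12 h13 h23 (wS i0 i1 i2 i3)
        (wS_diag h01 h02 h03 h12 h13 h23) wS_row wS_col]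
      funext g
      simp only [Pi.smul_apply, smul_eq_mul]
      rw [wS_symm (g i0) (g i1)]
      ring
end
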